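/- arXiv:1907.02551 — 7 statements merged into one kernel-verified Lean document; each statement's English description precedes it below -/
import Mathlib

section
/- Let p be any probability distribution on X × Y × Z for finite types X, Y, Z, with Z-marginal p_Z. For every real q ≠ 1 the conditional Tsallis mutual information decomposes as I_q(X:Y|Z) = ∑_{z with p_Z(z)>0} p_Z(z)^q · I_q(X:Y)_{p^{(z)}}, where p^{(z)} is the conditional distribution on X × Y given Z = z, defined by p^{(z)}(x,y) = p(x,y,z)/p_Z(z). -/
open Finset

/-- Tsallis entropy of order `q` of a distribution `p` on a finite type,
with the sum restricted to the support of `p`. -/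
noncomputable def tsallisEnt {α : Type*} [Fintype α] (q : ℝ) (p : α → ℝ) : ℝ :=
  (1 / (1 - q)) * ((∑ x ∈ univ.filter (fun x => 0 < p x), p x ^ q) - 1)

lemma splitSumAux {α Z : Type*} [Fintype α] [Fintype Z] (f : α → Z → ℝ)
    (hf : ∀ a z, 0 ≤ f a z) (q : ℝ) :
    ∑ w ∈ univ.filter (fun w : α × Z => 0 < f w.1 w.2), f w.1 w.2 ^ q
      = ∑ z ∈ univ.filter (fun z => 0 < ∑ a, f a z),
          ∑ a ∈ univ.filter (fun a => 0 < f a z), f a z ^ q := by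
  have h0 : ∀ z ∈ (univ : Finset Z),
      (∑ a ∈ univ.filter (fun a => 0 < f a z), f a z ^ q) ≠ 0 → 0 < ∑ a, f a z := by
    intro z _ h
    by_contra hz
    apply h
    have hz' : ∑ a, f a z = 0 :=
      le_antisymm (not_lt.mp hz) (Finset.sum_nonneg fun a _ => hf a z)
    have hall : ∀ a, f a z = 0 := fun a =>
      (Finset.sum_eq_zero_iff_of_nonneg (fun a _ => hf a z)).mp hz' a (mem_univ a)
    rw [Finset.filter_false_of_mem, Finset.sum_empty]
    intro a _
    simp [hall a]
  rw [Finset.sum_filter_of_ne h0, Finset.sum_filter]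
  rw [Fintype.sum_prod_type, Finset.sum_comm]
  simp [Finset.sum_filter]

lemma scaleSumAux {α : Type*} [Fintype α] (g : α → ℝ) (hg : ∀ a, 0 ≤ g a)
    (s : ℝ) (hs : 0 < s) (q : ℝ) :
    s ^ q * ∑ a ∈ univ.filter (fun a => 0 < g a / s), (g a / s) ^ q
      = ∑ a ∈ univ.filter (fun a => 0 < g a), g a ^ q := by
  have hfe : (univ.filter fun a => 0 < g a / s) = univ.filter fun a => 0 < g a := by
    apply Finset.filter_congr
    intro a _
    constructor
    · intro h
      have := mul_pos h hs
      rwa [div_mul_cancel₀ _ hs.ne'] at this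
    · intro h
      exact div_pos h hs
  rw [hfe, Finset.mul_sum]
  refine Finset.sum_congr rfl fun a ha => ?_
  rw [Real.div_rpow (hg a) hs.le]
  have : (s : ℝ) ^ q ≠ 0 := (Real.rpow_pos_of_pos hs q).ne'
  field_simp

/-- For any probability distribution `p` on `X × Y × Z` and real `q ≠ 1`, the
conditional Tsallis mutual information `I_q(X:Y|Z) = S_q(XZ)+S_q(YZ)−S_q(Z)−S_q(XYZ)`
decomposes as `∑_{z : p_Z(z)>0} p_Z(z)^q · I_q(X:Y)` evaluated on the conditional
distribution `p^{(z)}(x,y) = p(x,y,z)/p_Z(z)`. -/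
theorem tsallis_cond_mutual_info_decomposition
    {X Y Z : Type*} [Fintype X] [Fintype Y] [Fintype Z]
    (p : X × Y × Z → ℝ) (hp0 : ∀ t, 0 ≤ p t) (hp1 : ∑ t, p t = 1)
    (q : ℝ) (hq1 : q ≠ 1) :
    tsallisEnt q (fun w : X × Z => ∑ y, p (w.1, y, w.2))
        + tsallisEnt q (fun w : Y × Z => ∑ x, p (x, w.1, w.2))
        - tsallisEnt q (fun z => ∑ x, ∑ y, p (x, y, z))
        - tsallisEnt q p
      = ∑ z ∈ univ.filter (fun z => 0 < ∑ x, ∑ y, p (x, y, z)),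
          (∑ x, ∑ y, p (x, y, z)) ^ q *
            (tsallisEnt q (fun x => ∑ y, p (x, y, z) / (∑ x', ∑ y', p (x', y', z)))
              + tsallisEnt q (fun y => ∑ x, p (x, y, z) / (∑ x', ∑ y', p (x', y', z)))
              - tsallisEnt q (fun w : X × Y =>
                  p (w.1, w.2, z) / (∑ x', ∑ y', p (x', y', z)))) := by
  classical
  have ha : ∀ (x : X) (z : Z), 0 ≤ ∑ y, p (x, y, z) :=
    fun x z => Finset.sum_nonneg fun y _ => hp0 _
  have hb : ∀ (y : Y) (z : Z), 0 ≤ ∑ x, p (x, y, z) :=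
    fun y z => Finset.sum_nonneg fun x _ => hp0 _
  have hA : (∑ w ∈ univ.filter (fun w : X × Z => 0 < ∑ y, p (w.1, y, w.2)),
        (∑ y, p (w.1, y, w.2)) ^ q)
      = ∑ z ∈ univ.filter (fun z => 0 < ∑ x, ∑ y, p (x, y, z)),
          ∑ x ∈ univ.filter (fun x => 0 < ∑ y, p (x, y, z)), (∑ y, p (x, y, z)) ^ q :=
    splitSumAux (fun x z => ∑ y, p (x, y, z)) ha q
  have hB0 : (∑ w ∈ univ.filter (fun w : Y × Z => 0 < ∑ x, p (x, w.1, w.2)),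
        (∑ x, p (x, w.1, w.2)) ^ q)
      = ∑ z ∈ univ.filter (fun z => 0 < ∑ y, ∑ x, p (x, y, z)),
          ∑ y ∈ univ.filter (fun y => 0 < ∑ x, p (x, y, z)), (∑ x, p (x, y, z)) ^ q :=
    splitSumAux (fun y z => ∑ x, p (x, y, z)) hb q
  have hBf : (univ.filter (fun z => 0 < ∑ y, ∑ x, p (x, y, z)))
      = univ.filter (fun z => 0 < ∑ x, ∑ y, p (x, y, z)) := by
    apply Finset.filter_congr
    intro z _
    rw [Finset.sum_comm]
  rw [hBf] at hB0
  have hD0 : (∑ w ∈ univ.filter (fun w : (X × Y) × Z => 0 < p (w.1.1, w.1.2, w.2)),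
        p (w.1.1, w.1.2, w.2) ^ q)
      = ∑ z ∈ univ.filter (fun z => 0 < ∑ w : X × Y, p (w.1, w.2, z)),
          ∑ w ∈ univ.filter (fun w : X × Y => 0 < p (w.1, w.2, z)), p (w.1, w.2, z) ^ q :=
    splitSumAux (fun (w : X × Y) z => p (w.1, w.2, z)) (fun w z => hp0 _) q
  have hDf : (univ.filter (fun z => 0 < ∑ w : X × Y, p (w.1, w.2, z)))
      = univ.filter (fun z => 0 < ∑ x, ∑ y, p (x, y, z)) := by
    apply Finset.filter_congr
    intro z _
    rw [Fintype.sum_prod_type]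
  rw [hDf] at hD0
  have hDe : (∑ w ∈ univ.filter (fun w : X × Y × Z => 0 < p w), p w ^ q)
      = ∑ w ∈ univ.filter (fun w : (X × Y) × Z => 0 < p (w.1.1, w.1.2, w.2)),
          p (w.1.1, w.1.2, w.2) ^ q := by
    rw [Finset.sum_filter, Finset.sum_filter]
    exact Fintype.sum_equiv (Equiv.prodAssoc X Y Z).symm _ _ (fun w => rfl)
  have step : ∀ z ∈ univ.filter (fun z => 0 < ∑ x, ∑ y, p (x, y, z)),
      (∑ x, ∑ y, p (x, y, z)) ^ q *
        ((1 / (1 - q)) * ((∑ x ∈ univ.filter (fun x =>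
              0 < (∑ y, p (x, y, z)) / (∑ x', ∑ y', p (x', y', z))),
            ((∑ y, p (x, y, z)) / (∑ x', ∑ y', p (x', y', z))) ^ q) - 1)
          + (1 / (1 - q)) * ((∑ y ∈ univ.filter (fun y =>
              0 < (∑ x, p (x, y, z)) / (∑ x', ∑ y', p (x', y', z))),
            ((∑ x, p (x, y, z)) / (∑ x', ∑ y', p (x', y', z))) ^ q) - 1)
          - (1 / (1 - q)) * ((∑ w ∈ univ.filter (fun w : X × Y =>
              0 < p (w.1, w.2, z) / (∑ x', ∑ y', p (x', y', z))),
            (p (w.1, w.2, z) / (∑ x', ∑ y', p (x', y', z))) ^ q) - 1))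
      = (1 / (1 - q)) *
          ((∑ x ∈ univ.filter (fun x => 0 < ∑ y, p (x, y, z)), (∑ y, p (x, y, z)) ^ q)
            + (∑ y ∈ univ.filter (fun y => 0 < ∑ x, p (x, y, z)), (∑ x, p (x, y, z)) ^ q)
            - (∑ w ∈ univ.filter (fun w : X × Y => 0 < p (w.1, w.2, z)),
                p (w.1, w.2, z) ^ q)
            - (∑ x, ∑ y, p (x, y, z)) ^ q) := by
    intro z hz
    have hz' : 0 < ∑ x, ∑ y, p (x, y, z) := by
      simpa using (Finset.mem_filter.mp hz).2
    have h1 : (∑ x, ∑ y, p (x, y, z)) ^ q *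
          (∑ x ∈ univ.filter (fun x =>
              0 < (∑ y, p (x, y, z)) / (∑ x', ∑ y', p (x', y', z))),
            ((∑ y, p (x, y, z)) / (∑ x', ∑ y', p (x', y', z))) ^ q)
        = ∑ x ∈ univ.filter (fun x => 0 < ∑ y, p (x, y, z)), (∑ y, p (x, y, z)) ^ q :=
      scaleSumAux (fun x => ∑ y, p (x, y, z)) (fun x => ha x z) _ hz' q
    have h2 : (∑ x, ∑ y, p (x, y, z)) ^ q *
          (∑ y ∈ univ.filter (fun y =>
              0 < (∑ x, p (x, y, z)) / (∑ x', ∑ y', p (x', y', z))),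
            ((∑ x, p (x, y, z)) / (∑ x', ∑ y', p (x', y', z))) ^ q)
        = ∑ y ∈ univ.filter (fun y => 0 < ∑ x, p (x, y, z)), (∑ x, p (x, y, z)) ^ q :=
      scaleSumAux (fun y => ∑ x, p (x, y, z)) (fun y => hb y z) _ hz' q
    have h3 : (∑ x, ∑ y, p (x, y, z)) ^ q *
          (∑ w ∈ univ.filter (fun w : X × Y =>
              0 < p (w.1, w.2, z) / (∑ x', ∑ y', p (x', y', z))),
            (p (w.1, w.2, z) / (∑ x', ∑ y', p (x', y', z))) ^ q)
        = ∑ w ∈ univ.filter (fun w : X × Y => 0 < p (w.1, w.2, z)), p (w.1, w.2, z) ^ q :=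
      scaleSumAux (fun w : X × Y => p (w.1, w.2, z)) (fun w => hp0 _) _ hz' q
    linear_combination (1 / (1 - q)) * h1 + (1 / (1 - q)) * h2 - (1 / (1 - q)) * h3
  simp only [tsallisEnt]
  simp_rw [← Finset.sum_div]
  rw [hA, hB0, hDe, hD0]
  rw [Finset.sum_congr rfl step, ← Finset.mul_sum]
  simp only [Finset.sum_add_distrib, Finset.sum_sub_distrib]
  ring
end

section
/- Let X, Y, Z be finite types of cardinalities d_X, d_Y, d_Z ≥ 1 and let p be a probability distribution on X × Y × Z satisfying the conditional independence p(x,y,z)·p_Z(z) = p_{XZ}(x,z)·p_{YZ}(y,z) for all x, y, z (where p_Z, p_{XZ}, p_{YZ} are the indicated marginals). Then for every real q > 1 the conditional Tsallis mutual information satisfies I_q(X:Y|Z) ≤ f(q,d_X,d_Y), where f(q,d_X,d_Y) = (1/(q−1))·(1−d_X^{1−q})·(1−d_Y^{1−q}). -/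
open Finset

/-- The bound `f(q,a,b) = (1/(q−1))·(1−a^{1−q})·(1−b^{1−q})`. -/
noncomputable def fBound (q : ℝ) (a b : ℕ) : ℝ :=
  (1 / (q - 1)) * (1 - (a : ℝ) ^ (1 - q)) * (1 - (b : ℝ) ^ (1 - q))

lemma aux_sum_rpow_le_one {α : Type*} [Fintype α] {q : ℝ} (hq : 1 ≤ q)
    (u : α → ℝ) (h0 : ∀ x, 0 ≤ u x) (h1 : ∑ x, u x = 1) :
    ∑ x, u x ^ q ≤ 1 := by
  calc ∑ x, u x ^ q ≤ ∑ x, u x := by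
        apply Finset.sum_le_sum
        intro x _
        rcases eq_or_lt_of_le (h0 x) with h | h
        · rw [← h, Real.zero_rpow (by linarith)]
        · have hle : u x ≤ 1 := by
            rw [← h1]
            exact Finset.single_le_sum (fun i _ => h0 i) (mem_univ x)
          calc u x ^ q ≤ u x ^ (1:ℝ) := Real.rpow_le_rpow_of_exponent_ge h hle hq
            _ = u x := Real.rpow_one _
    _ = 1 := h1

lemma aux_card_rpow_le_sum_rpow {α : Type*} [Fintype α] {q : ℝ} (hq : 1 ≤ q)
    (u : α → ℝ) (h0 : ∀ x, 0 ≤ u x) (h1 : ∑ x, u x = 1) :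
    (Fintype.card α : ℝ) ^ (1 - q) ≤ ∑ x, u x ^ q := by
  cases isEmpty_or_nonempty α with
  | inl h => simp at h1
  | inr h =>
    have hcard : (0:ℝ) < (Fintype.card α : ℝ) := by
      exact_mod_cast Fintype.card_pos
    set n : ℝ := (Fintype.card α : ℝ) with hn
    have key := Real.rpow_arith_mean_le_arith_mean_rpow univ (fun _ => 1/n) u
      (fun i _ => by positivity) (by rw [Finset.sum_const, nsmul_eq_mul]; field_simp; simp [hn])
      (fun i _ => h0 i) hq
    have hL : (∑ i, (1/n) * u i) = 1/n := by
      rw [← Finset.mul_sum, h1, mul_one]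
    have hR : (∑ i, (1/n) * u i ^ q) = (1/n) * ∑ i, u i ^ q := by
      rw [← Finset.mul_sum]
    rw [hL, hR] at key
    have h2 : (1/n) ^ q = n ^ (-q) := by
      rw [one_div, Real.inv_rpow hcard.le, ← Real.rpow_neg hcard.le]
    rw [h2] at key
    have h3 : n * n ^ (-q) ≤ ∑ i, u i ^ q := by
      have := mul_le_mul_of_nonneg_left key hcard.le
      calc n * n ^ (-q) ≤ n * (1/n * ∑ i, u i ^ q) := this
        _ = ∑ i, u i ^ q := by field_simp
    calc n ^ (1 - q) = n * n ^ (-q) := by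
          rw [show (1:ℝ) - q = 1 + (-q) by ring, Real.rpow_add hcard, Real.rpow_one]
      _ ≤ ∑ i, u i ^ q := h3

lemma aux_key {X Y : Type*} [Fintype X] [Fintype Y]
    (hdX : 1 ≤ Fintype.card X) (hdY : 1 ≤ Fintype.card Y) {q : ℝ} (hq : 1 < q)
    (r : X → Y → ℝ) (c : ℝ) (hr0 : ∀ x y, 0 ≤ r x y) (hc : ∑ x, ∑ y, r x y = c)
    (hCI : ∀ x y, r x y * c = (∑ y', r x y') * (∑ x', r x' y)) :
    c ^ q + (∑ x, ∑ y, (r x y) ^ q) - (∑ x, (∑ y', r x y') ^ q)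
        - (∑ y, (∑ x', r x' y) ^ q)
      ≤ c ^ q * ((1 - (Fintype.card X : ℝ) ^ (1 - q))
          * (1 - (Fintype.card Y : ℝ) ^ (1 - q))) := by
  have hqne : q ≠ 0 := by linarith
  have hc0 : 0 ≤ c := by
    rw [← hc]; exact Finset.sum_nonneg fun x _ => Finset.sum_nonneg fun y _ => hr0 x y
  rcases eq_or_lt_of_le hc0 with hc' | hc'
  · -- c = 0 : everything vanishes
    have hr : ∀ x y, r x y = 0 := by
      intro x y
      have h1 : ∑ x, ∑ y, r x y = 0 := by rw [hc, ← hc']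
      have h2 := (Finset.sum_eq_zero_iff_of_nonneg
        (fun x _ => Finset.sum_nonneg fun y _ => hr0 x y)).mp h1 x (mem_univ x)
      exact (Finset.sum_eq_zero_iff_of_nonneg (fun y _ => hr0 x y)).mp h2 y (mem_univ y)
    simp [hr, ← hc', Real.zero_rpow hqne]
  · -- c > 0
    set a : ℝ := (Fintype.card X : ℝ) ^ (1 - q) with ha
    set b : ℝ := (Fintype.card Y : ℝ) ^ (1 - q) with hb
    set u : X → ℝ := fun x => (∑ y', r x y') / c with hu
    set v : Y → ℝ := fun y => (∑ x', r x' y) / c with hv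
    have hu0 : ∀ x, 0 ≤ u x := fun x =>
      div_nonneg (Finset.sum_nonneg fun y _ => hr0 x y) hc0
    have hv0 : ∀ y, 0 ≤ v y := fun y =>
      div_nonneg (Finset.sum_nonneg fun x _ => hr0 x y) hc0
    have hu1 : ∑ x, u x = 1 := by
      rw [hu, ← Finset.sum_div, hc, div_self hc'.ne']
    have hv1 : ∑ y, v y = 1 := by
      rw [hv, ← Finset.sum_div, Finset.sum_comm, hc, div_self hc'.ne']
    have hrx : ∀ x, ∑ y', r x y' = c * u x := by
      intro x; rw [hu]; field_simp
    have hry : ∀ y, ∑ x', r x' y = c * v y := by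
      intro y; rw [hv]; field_simp
    have hfact : ∀ x y, r x y = c * (u x * v y) := by
      intro x y
      have h := hCI x y
      rw [hrx x, hry y] at h
      have : r x y * c = (c * (u x * v y)) * c := by rw [h]; ring
      exact mul_right_cancel₀ hc'.ne' this
    set U : ℝ := ∑ x, u x ^ q with hU
    set V : ℝ := ∑ y, v y ^ q with hV
    have hUle : U ≤ 1 := aux_sum_rpow_le_one hq.le u hu0 hu1
    have hVle : V ≤ 1 := aux_sum_rpow_le_one hq.le v hv0 hv1
    have hUge : a ≤ U := aux_card_rpow_le_sum_rpow hq.le u hu0 hu1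
    have hVge : b ≤ V := aux_card_rpow_le_sum_rpow hq.le v hv0 hv1
    have hcq : 0 ≤ c ^ q := Real.rpow_nonneg hc0 q
    have e1 : ∑ x, ∑ y, (r x y) ^ q = c ^ q * (U * V) := by
      have : ∀ x y, (r x y) ^ q = c ^ q * (u x ^ q * v y ^ q) := by
        intro x y
        rw [hfact x y, Real.mul_rpow hc0 (mul_nonneg (hu0 x) (hv0 y)),
          Real.mul_rpow (hu0 x) (hv0 y)]
      simp_rw [this, ← Finset.mul_sum, ← Finset.sum_mul]
      rfl

    have e2 : ∑ x, (∑ y', r x y') ^ q = c ^ q * U := by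
      have : ∀ x, (∑ y', r x y') ^ q = c ^ q * u x ^ q := by
        intro x; rw [hrx x, Real.mul_rpow hc0 (hu0 x)]
      simp_rw [this, ← Finset.mul_sum]
      rfl
    have e3 : ∑ y, (∑ x', r x' y) ^ q = c ^ q * V := by
      have : ∀ y, (∑ x', r x' y) ^ q = c ^ q * v y ^ q := by
        intro y; rw [hry y, Real.mul_rpow hc0 (hv0 y)]
      simp_rw [this, ← Finset.mul_sum]
      rfl
    rw [e1, e2, e3]
    have hmul : (1 - U) * (1 - V) ≤ (1 - a) * (1 - b) := by
      apply mul_le_mul (by linarith) (by linarith) (by linarith)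
      have : a ≤ 1 := Real.rpow_le_one_of_one_le_of_nonpos
        (by exact_mod_cast hdX) (by linarith)
      linarith
    calc c ^ q + c ^ q * (U * V) - c ^ q * U - c ^ q * V
        = c ^ q * ((1 - U) * (1 - V)) := by ring
      _ ≤ c ^ q * ((1 - a) * (1 - b)) := mul_le_mul_of_nonneg_left hmul hcq

lemma tsallisEnt_eq_full {α : Type*} [Fintype α] {q : ℝ} (hq : 0 < q)
    (u : α → ℝ) (h0 : ∀ x, 0 ≤ u x) :
    tsallisEnt q u = (1 / (1 - q)) * ((∑ x, u x ^ q) - 1) := by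
  unfold tsallisEnt
  congr 2
  apply Finset.sum_filter_of_ne
  intro x _ hx
  rcases eq_or_lt_of_le (h0 x) with h | h
  · rw [← h, Real.zero_rpow hq.ne'] at hx; exact absurd rfl hx
  · exact h

lemma sum_rot {X Y Z M : Type*} [Fintype X] [Fintype Y] [Fintype Z]
    [AddCommMonoid M] (f : X → Y → Z → M) :
    ∑ x, ∑ y, ∑ z, f x y z = ∑ z, ∑ x, ∑ y, f x y z :=
  calc ∑ x, ∑ y, ∑ z, f x y z
      = ∑ x, ∑ z, ∑ y, f x y z := Finset.sum_congr rfl fun x _ => Finset.sum_comm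
    _ = ∑ z, ∑ x, ∑ y, f x y z := Finset.sum_comm

/-- If a distribution `p` on `X × Y × Z` satisfies the conditional independence
`p(x,y,z)·p_Z(z) = p_{XZ}(x,z)·p_{YZ}(y,z)`, then for every `q > 1` the conditional
Tsallis mutual information `I_q(X:Y|Z)` is at most `f(q,d_X,d_Y)`. -/
theorem tsallis_cond_mutual_info_le_of_cond_indep
    {X Y Z : Type*} [Fintype X] [Fintype Y] [Fintype Z]
    (hdX : 1 ≤ Fintype.card X) (hdY : 1 ≤ Fintype.card Y) (hdZ : 1 ≤ Fintype.card Z)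
    (p : X × Y × Z → ℝ) (hp0 : ∀ t, 0 ≤ p t) (hp1 : ∑ t, p t = 1)
    (hCI : ∀ x y z, p (x, y, z) * (∑ x', ∑ y', p (x', y', z))
      = (∑ y', p (x, y', z)) * (∑ x', p (x', y, z)))
    (q : ℝ) (hq : 1 < q) :
    tsallisEnt q (fun w : X × Z => ∑ y, p (w.1, y, w.2))
        + tsallisEnt q (fun w : Y × Z => ∑ x, p (x, w.1, w.2))
        - tsallisEnt q (fun z => ∑ x, ∑ y, p (x, y, z))
        - tsallisEnt q p
      ≤ fBound q (Fintype.card X) (Fintype.card Y) := by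
  have hq0 : (0:ℝ) < q := by linarith
  have hq1 : (0:ℝ) < q - 1 := by linarith
  set a : ℝ := (Fintype.card X : ℝ) ^ (1 - q) with ha
  set b : ℝ := (Fintype.card Y : ℝ) ^ (1 - q) with hb
  -- marginals
  set PZ : Z → ℝ := fun z => ∑ x, ∑ y, p (x, y, z) with hPZ
  have hPZ0 : ∀ z, 0 ≤ PZ z := fun z =>
    Finset.sum_nonneg fun x _ => Finset.sum_nonneg fun y _ => hp0 _
  -- rewrite hp1 by z
  have hp1' : ∑ z, PZ z = 1 := by
    rw [← hp1]
    simp_rw [Fintype.sum_prod_type]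
    exact (sum_rot fun x y z => p (x, y, z)).symm
  -- full-sum forms of the four entropies
  have hA : tsallisEnt q (fun w : X × Z => ∑ y, p (w.1, y, w.2))
      = (1 / (1 - q)) * ((∑ z, ∑ x, (∑ y, p (x, y, z)) ^ q) - 1) := by
    rw [tsallisEnt_eq_full hq0 _ (fun w => Finset.sum_nonneg fun y _ => hp0 _)]
    congr 2
    rw [Fintype.sum_prod_type]
    exact Finset.sum_comm
  have hB : tsallisEnt q (fun w : Y × Z => ∑ x, p (x, w.1, w.2))
      = (1 / (1 - q)) * ((∑ z, ∑ y, (∑ x, p (x, y, z)) ^ q) - 1) := by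
    rw [tsallisEnt_eq_full hq0 _ (fun w => Finset.sum_nonneg fun x _ => hp0 _)]
    congr 2
    rw [Fintype.sum_prod_type]
    exact Finset.sum_comm
  have hC : tsallisEnt q (fun z => ∑ x, ∑ y, p (x, y, z))
      = (1 / (1 - q)) * ((∑ z, PZ z ^ q) - 1) := by
    rw [tsallisEnt_eq_full hq0 _ hPZ0]
  have hD : tsallisEnt q p
      = (1 / (1 - q)) * ((∑ z, ∑ x, ∑ y, p (x, y, z) ^ q) - 1) := by
    rw [tsallisEnt_eq_full hq0 _ hp0]
    congr 2
    simp_rw [Fintype.sum_prod_type]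
    exact sum_rot fun x y z => p (x, y, z) ^ q
  set A : ℝ := ∑ z, ∑ x, (∑ y, p (x, y, z)) ^ q with hAdef
  set B : ℝ := ∑ z, ∑ y, (∑ x, p (x, y, z)) ^ q with hBdef
  set C : ℝ := ∑ z, PZ z ^ q with hCdef
  set D : ℝ := ∑ z, ∑ x, ∑ y, p (x, y, z) ^ q with hDdef
  rw [hA, hB, hC, hD]
  -- key inequality
  have hK0 : 0 ≤ (1 - a) * (1 - b) := by
    have h1 : a ≤ 1 := Real.rpow_le_one_of_one_le_of_nonpos
      (by exact_mod_cast hdX) (by linarith)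
    have h2 : b ≤ 1 := Real.rpow_le_one_of_one_le_of_nonpos
      (by exact_mod_cast hdY) (by linarith)
    nlinarith
  have key : C + D - A - B ≤ (1 - a) * (1 - b) := by
    have hzkey : ∀ z, PZ z ^ q + (∑ x, ∑ y, p (x, y, z) ^ q)
        - (∑ x, (∑ y, p (x, y, z)) ^ q) - (∑ y, (∑ x, p (x, y, z)) ^ q)
        ≤ PZ z ^ q * ((1 - a) * (1 - b)) := by
      intro z
      exact aux_key hdX hdY hq (fun x y => p (x, y, z)) (PZ z)
        (fun x y => hp0 _) rfl (fun x y => hCI x y z)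
    calc C + D - A - B
        = ∑ z, (PZ z ^ q + (∑ x, ∑ y, p (x, y, z) ^ q)
            - (∑ x, (∑ y, p (x, y, z)) ^ q) - (∑ y, (∑ x, p (x, y, z)) ^ q)) := by
          rw [hAdef, hBdef, hCdef, hDdef, ← Finset.sum_add_distrib,
            ← Finset.sum_sub_distrib, ← Finset.sum_sub_distrib]
      _ ≤ ∑ z, PZ z ^ q * ((1 - a) * (1 - b)) :=
          Finset.sum_le_sum fun z _ => hzkey z
      _ = (∑ z, PZ z ^ q) * ((1 - a) * (1 - b)) := by rw [← Finset.sum_mul]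
      _ ≤ 1 * ((1 - a) * (1 - b)) := by
          apply mul_le_mul_of_nonneg_right _ hK0
          exact aux_sum_rpow_le_one hq.le PZ hPZ0 hp1'
      _ = (1 - a) * (1 - b) := one_mul _
  have hne : (1:ℝ) - q ≠ 0 := by linarith
  have hne' : q - 1 ≠ 0 := by linarith
  calc (1 / (1 - q)) * (A - 1) + (1 / (1 - q)) * (B - 1)
        - (1 / (1 - q)) * (C - 1) - (1 / (1 - q)) * (D - 1)
      = (1 / (q - 1)) * (C + D - A - B) := by field_simp; ring
    _ ≤ (1 / (q - 1)) * ((1 - a) * (1 - b)) :=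
        mul_le_mul_of_nonneg_left key (by positivity)
    _ = fBound q (Fintype.card X) (Fintype.card Y) := by
        rw [fBound, ha, hb]; ring
end

section
/- Let X, Y, Z be finite types of fixed cardinalities d_X, d_Y, d_Z ≥ 1. For every real q > 1, the supremum of I_q(X:Y|Z) over all probability distributions p on X × Y × Z satisfying p(x,y,z)·p_Z(z) = p_{XZ}(x,z)·p_{YZ}(y,z) for all x, y, z equals the supremum of I_q(X:Y) over all probability distributions on X × Y of product form p(x,y) = p_X(x)·p_Y(y); both suprema equal f(q,d_X,d_Y) and both are attained. -/
open Finset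

private lemma sum_rpow_le_rpow_sum' {α : Type*} (s : Finset α) (f : α → ℝ) {q : ℝ}
    (hq : 1 ≤ q) (hf : ∀ i ∈ s, 0 ≤ f i) :
    ∑ i ∈ s, f i ^ q ≤ (∑ i ∈ s, f i) ^ q := by
  have hq0 : q ≠ 0 := by positivity
  set S := ∑ i ∈ s, f i with hS
  have hS0 : 0 ≤ S := Finset.sum_nonneg hf
  rcases hS0.eq_or_lt with h | h
  · have hall : ∀ i ∈ s, f i = 0 := (Finset.sum_eq_zero_iff_of_nonneg hf).1 h.symm
    rw [← h]
    rw [Finset.sum_congr rfl (fun i hi => by rw [hall i hi, Real.zero_rpow hq0]),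
      Real.zero_rpow hq0]
    simp
  · calc ∑ i ∈ s, f i ^ q ≤ ∑ i ∈ s, f i * S ^ (q - 1) := by
          apply Finset.sum_le_sum
          intro i hi
          rcases (hf i hi).eq_or_lt with h0 | h0
          · rw [← h0, Real.zero_rpow hq0, zero_mul]
          · have e : f i ^ q = f i * f i ^ (q - 1) := by
              have := Real.rpow_add h0 1 (q - 1)
              rw [show (1:ℝ) + (q - 1) = q by ring, Real.rpow_one] at this
              exact this
            rw [e]
            exact mul_le_mul_of_nonneg_left
              (Real.rpow_le_rpow (hf i hi) (Finset.single_le_sum hf hi) (by linarith))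
              (hf i hi)
      _ = S * S ^ (q - 1) := by rw [← Finset.sum_mul]
      _ = S ^ q := by
          nth_rewrite 1 [← Real.rpow_one S]
          rw [← Real.rpow_add h, show (1:ℝ) + (q - 1) = q by ring]

private lemma card_rpow_mul_le {α : Type*} [Fintype α] (hcard : 1 ≤ Fintype.card α)
    (f : α → ℝ) {q : ℝ} (hq : 1 ≤ q) (hf : ∀ i, 0 ≤ f i) :
    (Fintype.card α : ℝ) ^ (1 - q) * (∑ i, f i) ^ q ≤ ∑ i, f i ^ q := by
  have hn : (0:ℝ) < (Fintype.card α : ℝ) := by exact_mod_cast hcard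
  have h1 := Real.rpow_sum_le_const_mul_sum_rpow_of_nonneg Finset.univ hq
    (fun i _ => hf i)
  rw [Finset.card_univ] at h1
  have h2 : (Fintype.card α : ℝ) ^ (1 - q) * (∑ i, f i) ^ q ≤
      (Fintype.card α : ℝ) ^ (1 - q) * ((Fintype.card α : ℝ) ^ (q - 1) * ∑ i, f i ^ q) :=
    mul_le_mul_of_nonneg_left h1 (Real.rpow_nonneg hn.le _)
  calc (Fintype.card α : ℝ) ^ (1 - q) * (∑ i, f i) ^ q ≤ _ := h2
    _ = ∑ i, f i ^ q := by
        rw [← mul_assoc, ← Real.rpow_add hn, show (1 - q) + (q - 1) = 0 by ring,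
          Real.rpow_zero, one_mul]

private lemma tsallisEnt_eq {α : Type*} [Fintype α] {q : ℝ} (hq : q ≠ 0) (p : α → ℝ)
    (hp : ∀ x, 0 ≤ p x) :
    tsallisEnt q p = (1 / (1 - q)) * ((∑ x, p x ^ q) - 1) := by
  unfold tsallisEnt
  congr 2
  apply Finset.sum_subset (Finset.filter_subset _ _)
  intro x _ hx
  have h0 : p x = 0 := le_antisymm (not_lt.1 (by simpa using hx)) (hp x)
  rw [h0, Real.zero_rpow hq]

private lemma swap3 {X Y Z : Type*} [Fintype X] [Fintype Y] [Fintype Z] (g : X → Y → Z → ℝ) :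
    ∑ x, ∑ y, ∑ z, g x y z = ∑ z, ∑ x, ∑ y, g x y z :=
  calc ∑ x, ∑ y, ∑ z, g x y z
      = ∑ x, ∑ z, ∑ y, g x y z := Finset.sum_congr rfl (fun x _ => Finset.sum_comm)
    _ = ∑ z, ∑ x, ∑ y, g x y z := Finset.sum_comm

/-- Upper bound for the conditional case. -/
private lemma bound1 {X Y Z : Type*} [Fintype X] [Fintype Y] [Fintype Z]
    (hdX : 1 ≤ Fintype.card X) (hdY : 1 ≤ Fintype.card Y) {q : ℝ} (hq : 1 < q)
    (p : X × Y × Z → ℝ) (hp0 : ∀ t, 0 ≤ p t) (hp1 : ∑ t, p t = 1)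
    (hci : ∀ x y z, p (x, y, z) * (∑ x', ∑ y', p (x', y', z))
          = (∑ y', p (x, y', z)) * (∑ x', p (x', y, z))) :
    tsallisEnt q (fun w : X × Z => ∑ y, p (w.1, y, w.2))
      + tsallisEnt q (fun w : Y × Z => ∑ x, p (x, w.1, w.2))
      - tsallisEnt q (fun z => ∑ x, ∑ y, p (x, y, z))
      - tsallisEnt q p ≤ fBound q (Fintype.card X) (Fintype.card Y) := by
  have hq0 : q ≠ 0 := by positivity
  have hq1 : (1:ℝ) ≤ q := hq.le
  set dX := Fintype.card X with hdXdef
  set dY := Fintype.card Y with hdYdef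
  have hdXpos : (0:ℝ) < dX := by exact_mod_cast hdX
  have hdYpos : (0:ℝ) < dY := by exact_mod_cast hdY
  set α : ℝ := (dX:ℝ) ^ (1 - q) with hα
  set β : ℝ := (dY:ℝ) ^ (1 - q) with hβ
  have hα0 : 0 ≤ α := Real.rpow_nonneg hdXpos.le _
  have hβ0 : 0 ≤ β := Real.rpow_nonneg hdYpos.le _
  have hα1 : α ≤ 1 := Real.rpow_le_one_of_one_le_of_nonpos (by exact_mod_cast hdX) (by linarith)
  have hβ1 : β ≤ 1 := Real.rpow_le_one_of_one_le_of_nonpos (by exact_mod_cast hdY) (by linarith)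
  set A : X → Z → ℝ := fun x z => ∑ y, p (x, y, z) with hA
  set B : Y → Z → ℝ := fun y z => ∑ x, p (x, y, z) with hB
  set c : Z → ℝ := fun z => ∑ x, ∑ y, p (x, y, z) with hc
  set a : Z → ℝ := fun z => ∑ x, A x z ^ q with ha
  set b : Z → ℝ := fun z => ∑ y, B y z ^ q with hb
  set s : Z → ℝ := fun z => ∑ x, ∑ y, p (x, y, z) ^ q with hs
  have hA0 : ∀ x z, 0 ≤ A x z := fun x z => Finset.sum_nonneg (fun _ _ => hp0 _)
  have hB0 : ∀ y z, 0 ≤ B y z := fun y z => Finset.sum_nonneg (fun _ _ => hp0 _)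
  have hc0 : ∀ z, 0 ≤ c z := fun z =>
    Finset.sum_nonneg (fun _ _ => Finset.sum_nonneg (fun _ _ => hp0 _))
  have hac : ∀ z, ∑ x, A x z = c z := fun z => rfl
  have hbc : ∀ z, ∑ y, B y z = c z := fun z => Finset.sum_comm
  have hcsum : ∑ z, c z = 1 := by
    rw [← hp1]
    have : ∑ t : X × Y × Z, p t = ∑ x, ∑ y, ∑ z, p (x, y, z) := by
      rw [Fintype.sum_prod_type]
      exact Finset.sum_congr rfl (fun x _ => Fintype.sum_prod_type _)
    rw [this]
    exact (swap3 (fun x y z => p (x, y, z))).symm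
  -- key identity from conditional independence
  have hkey : ∀ z, (c z) ^ q * s z = a z * b z := by
    intro z
    have hpt : ∀ x y, p (x, y, z) ^ q * (c z) ^ q = A x z ^ q * B y z ^ q := by
      intro x y
      rw [← Real.mul_rpow (hp0 _) (hc0 z), hci x y z, Real.mul_rpow (hA0 x z) (hB0 y z)]
    have e1 : (c z) ^ q * s z = ∑ x, ∑ y, p (x, y, z) ^ q * (c z) ^ q := by
      simp only [hs, Finset.mul_sum]
      exact Finset.sum_congr rfl (fun x _ => Finset.sum_congr rfl (fun y _ => mul_comm _ _))
    rw [e1]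
    calc ∑ x, ∑ y, p (x, y, z) ^ q * (c z) ^ q = ∑ x, ∑ y, A x z ^ q * B y z ^ q :=
          Finset.sum_congr rfl (fun x _ => Finset.sum_congr rfl (fun y _ => hpt x y))
      _ = a z * b z := (Finset.sum_mul_sum _ _ _ _).symm
  -- per-z inequality
  have hz : ∀ z, (c z) ^ q + s z - a z - b z ≤ (c z) ^ q * ((1 - α) * (1 - β)) := by
    intro z
    rcases (hc0 z).eq_or_lt with h | h
    · have hpz : ∀ x y, p (x, y, z) = 0 := by
        intro x y
        have h1 : ∀ x' ∈ Finset.univ, (0:ℝ) ≤ ∑ y', p (x', y', z) :=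
          fun x' _ => Finset.sum_nonneg (fun _ _ => hp0 _)
        have h2 : ∑ y', p (x, y', z) = 0 :=
          (Finset.sum_eq_zero_iff_of_nonneg h1).1 h.symm x (Finset.mem_univ x)
        exact (Finset.sum_eq_zero_iff_of_nonneg (fun y' _ => hp0 _)).1 h2 y (Finset.mem_univ y)
      have hAz : ∀ x, A x z = 0 := fun x => by simp [hA, hpz]
      have hBz : ∀ y, B y z = 0 := fun y => by simp [hB, hpz]
      have haz : a z = 0 := by simp [ha, hAz, Real.zero_rpow hq0]
      have hbz : b z = 0 := by simp [hb, hBz, Real.zero_rpow hq0]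
      have hsz : s z = 0 := by simp [hs, hpz, Real.zero_rpow hq0]
      rw [haz, hbz, hsz, ← h, Real.zero_rpow hq0]
      simp
    · have hcq : (0:ℝ) < (c z) ^ q := Real.rpow_pos_of_pos h q
      have hA1 : a z ≤ (c z) ^ q := by
        have := sum_rpow_le_rpow_sum' Finset.univ (fun x => A x z) hq1 (fun i _ => hA0 i z)
        rwa [hac z] at this
      have hA2 : α * (c z) ^ q ≤ a z := by
        have := card_rpow_mul_le hdX (fun x => A x z) hq1 (fun i => hA0 i z)
        rwa [hac z] at this
      have hB1 : b z ≤ (c z) ^ q := by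
        have := sum_rpow_le_rpow_sum' Finset.univ (fun y => B y z) hq1 (fun i _ => hB0 i z)
        rwa [hbc z] at this
      have hB2 : β * (c z) ^ q ≤ b z := by
        have := card_rpow_mul_le hdY (fun y => B y z) hq1 (fun i => hB0 i z)
        rwa [hbc z] at this
      have h5 : ((c z) ^ q - a z) * ((c z) ^ q - b z)
          ≤ ((c z) ^ q * (1 - α)) * ((c z) ^ q * (1 - β)) := by
        apply mul_le_mul (by nlinarith) (by nlinarith) (by nlinarith) (by nlinarith)
      have h6 : (c z) ^ q * ((c z) ^ q + s z - a z - b z)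
          ≤ (c z) ^ q * ((c z) ^ q * ((1 - α) * (1 - β))) := by nlinarith [hkey z, h5]
      exact le_of_mul_le_mul_left h6 hcq
  -- sum the per-z inequalities
  have hcqsum : ∑ z, (c z) ^ q ≤ 1 := by
    have := sum_rpow_le_rpow_sum' Finset.univ c hq1 (fun z _ => hc0 z)
    rwa [hcsum, Real.one_rpow] at this
  have hsumineq : ∑ z, ((c z) ^ q + s z - a z - b z) ≤ (1 - α) * (1 - β) := by
    calc ∑ z, ((c z) ^ q + s z - a z - b z) ≤ ∑ z, (c z) ^ q * ((1 - α) * (1 - β)) :=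
          Finset.sum_le_sum (fun z _ => hz z)
      _ = (∑ z, (c z) ^ q) * ((1 - α) * (1 - β)) := by rw [← Finset.sum_mul]
      _ ≤ 1 * ((1 - α) * (1 - β)) :=
          mul_le_mul_of_nonneg_right hcqsum (by nlinarith)
      _ = (1 - α) * (1 - β) := one_mul _
  -- rewrite the entropies
  have e1 : ∑ w : X × Z, (∑ y, p (w.1, y, w.2)) ^ q = ∑ z, a z := by
    rw [Fintype.sum_prod_type]
    exact Finset.sum_comm
  have e2 : ∑ w : Y × Z, (∑ x, p (x, w.1, w.2)) ^ q = ∑ z, b z := by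
    rw [Fintype.sum_prod_type]
    exact Finset.sum_comm
  have e4 : ∑ t : X × Y × Z, p t ^ q = ∑ z, s z := by
    have : ∑ t : X × Y × Z, p t ^ q = ∑ x, ∑ y, ∑ z, p (x, y, z) ^ q := by
      rw [Fintype.sum_prod_type]
      exact Finset.sum_congr rfl (fun x _ => Fintype.sum_prod_type _)
    rw [this]
    exact swap3 (fun x y z => p (x, y, z) ^ q)
  rw [tsallisEnt_eq hq0 (fun w : X × Z => ∑ y, p (w.1, y, w.2))
      (fun w => Finset.sum_nonneg fun _ _ => hp0 _),
    tsallisEnt_eq hq0 (fun w : Y × Z => ∑ x, p (x, w.1, w.2))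
      (fun w => Finset.sum_nonneg fun _ _ => hp0 _),
    tsallisEnt_eq hq0 c hc0, tsallisEnt_eq hq0 p hp0]
  rw [e1, e2, e4]
  have expand : ∑ z, ((c z) ^ q + s z - a z - b z)
      = (∑ z, (c z) ^ q) + (∑ z, s z) - (∑ z, a z) - (∑ z, b z) := by
    rw [← Finset.sum_add_distrib, ← Finset.sum_sub_distrib, ← Finset.sum_sub_distrib]
  have final : (1 / (1 - q)) * ((∑ z, a z) - 1) + (1 / (1 - q)) * ((∑ z, b z) - 1)
      - (1 / (1 - q)) * ((∑ z, (c z) ^ q) - 1) - (1 / (1 - q)) * ((∑ z, s z) - 1)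
      = (1 / (q - 1)) * ((∑ z, (c z) ^ q) + (∑ z, s z) - (∑ z, a z) - (∑ z, b z)) := by
    have hq1' : q - 1 ≠ 0 := by linarith
    have hq1'' : 1 - q ≠ 0 := by linarith
    field_simp
    ring
  rw [final, ← expand]
  have : fBound q dX dY = (1 / (q - 1)) * ((1 - α) * (1 - β)) := by
    rw [fBound, hα, hβ]; ring
  rw [this]
  exact mul_le_mul_of_nonneg_left hsumineq
    (by have h01 : (0:ℝ) < q - 1 := by linarith
        positivity)

private lemma bound2 {X Y : Type*} [Fintype X] [Fintype Y]
    (hdX : 1 ≤ Fintype.card X) (hdY : 1 ≤ Fintype.card Y) {q : ℝ} (hq : 1 < q)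
    (p : X × Y → ℝ) (hp0 : ∀ t, 0 ≤ p t) (hp1 : ∑ t, p t = 1)
    (hprod : ∀ x y, p (x, y) = (∑ y', p (x, y')) * (∑ x', p (x', y))) :
    tsallisEnt q (fun x => ∑ y, p (x, y)) + tsallisEnt q (fun y => ∑ x, p (x, y))
      - tsallisEnt q p ≤ fBound q (Fintype.card X) (Fintype.card Y) := by
  have hq0 : q ≠ 0 := by positivity
  have hq1 : (1:ℝ) ≤ q := hq.le
  have hq1' : q - 1 ≠ 0 := by linarith
  have hq1'' : 1 - q ≠ 0 := by linarith
  have hdXpos : (0:ℝ) < Fintype.card X := by exact_mod_cast hdX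
  have hdYpos : (0:ℝ) < Fintype.card Y := by exact_mod_cast hdY
  set α : ℝ := (Fintype.card X : ℝ) ^ (1 - q) with hα
  set β : ℝ := (Fintype.card Y : ℝ) ^ (1 - q) with hβ
  have hα0 : 0 ≤ α := Real.rpow_nonneg hdXpos.le _
  have hβ0 : 0 ≤ β := Real.rpow_nonneg hdYpos.le _
  have hα1 : α ≤ 1 := Real.rpow_le_one_of_one_le_of_nonpos (by exact_mod_cast hdX) (by linarith)
  have hβ1 : β ≤ 1 := Real.rpow_le_one_of_one_le_of_nonpos (by exact_mod_cast hdY) (by linarith)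
  have hA0 : ∀ x, 0 ≤ ∑ y, p (x, y) := fun x => Finset.sum_nonneg (fun _ _ => hp0 _)
  have hB0 : ∀ y, 0 ≤ ∑ x, p (x, y) := fun y => Finset.sum_nonneg (fun _ _ => hp0 _)
  have hAsum : ∑ x, ∑ y, p (x, y) = 1 := by rw [← hp1, Fintype.sum_prod_type]
  have hBsum : ∑ y, ∑ x, p (x, y) = 1 := by rw [← hAsum]; exact Finset.sum_comm
  set a : ℝ := ∑ x, (∑ y, p (x, y)) ^ q with hadef
  set b : ℝ := ∑ y, (∑ x, p (x, y)) ^ q with hbdef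
  have ha1 : a ≤ 1 := by
    have := sum_rpow_le_rpow_sum' Finset.univ (fun x => ∑ y, p (x, y)) hq1 (fun i _ => hA0 i)
    rwa [hAsum, Real.one_rpow] at this
  have ha2 : α ≤ a := by
    have := card_rpow_mul_le hdX (fun x => ∑ y, p (x, y)) hq1 hA0
    rwa [hAsum, Real.one_rpow, mul_one] at this
  have hb1 : b ≤ 1 := by
    have := sum_rpow_le_rpow_sum' Finset.univ (fun y => ∑ x, p (x, y)) hq1 (fun i _ => hB0 i)
    rwa [hBsum, Real.one_rpow] at this
  have hb2 : β ≤ b := by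
    have := card_rpow_mul_le hdY (fun y => ∑ x, p (x, y)) hq1 hB0
    rwa [hBsum, Real.one_rpow, mul_one] at this
  have hpq : ∑ t : X × Y, p t ^ q = a * b := by
    rw [Fintype.sum_prod_type]
    calc ∑ x, ∑ y, p (x, y) ^ q
        = ∑ x, ∑ y, (∑ y', p (x, y')) ^ q * (∑ x', p (x', y)) ^ q :=
          Finset.sum_congr rfl fun x _ => Finset.sum_congr rfl fun y _ => by
            rw [hprod x y, Real.mul_rpow (hA0 x) (hB0 y)]
      _ = a * b := (Finset.sum_mul_sum _ _ _ _).symm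
  rw [tsallisEnt_eq hq0 (fun x => ∑ y, p (x, y)) hA0,
    tsallisEnt_eq hq0 (fun y => ∑ x, p (x, y)) hB0,
    tsallisEnt_eq hq0 p hp0, hpq]
  have final : (1 / (1 - q)) * (a - 1) + (1 / (1 - q)) * (b - 1) - (1 / (1 - q)) * (a * b - 1)
      = (1 / (q - 1)) * ((1 - a) * (1 - b)) := by field_simp; ring
  rw [final]
  have hfb : fBound q (Fintype.card X) (Fintype.card Y) = (1 / (q - 1)) * ((1 - α) * (1 - β)) := by
    rw [fBound]; ring
  rw [hfb]
  have h01 : (0:ℝ) < q - 1 := by linarith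
  exact mul_le_mul_of_nonneg_left
    (mul_le_mul (by linarith) (by linarith) (by linarith) (by linarith)) (by positivity)

private lemma attain1 {X Y Z : Type*} [Fintype X] [Fintype Y] [Fintype Z]
    (hdX : 1 ≤ Fintype.card X) (hdY : 1 ≤ Fintype.card Y) (z0 : Z) {q : ℝ} (hq : 1 < q) :
    ∃ p : X × Y × Z → ℝ, (∀ t, 0 ≤ p t) ∧ (∑ t, p t = 1) ∧
      (∀ x y z, p (x, y, z) * (∑ x', ∑ y', p (x', y', z))
        = (∑ y', p (x, y', z)) * (∑ x', p (x', y, z))) ∧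
      fBound q (Fintype.card X) (Fintype.card Y)
        = tsallisEnt q (fun w : X × Z => ∑ y, p (w.1, y, w.2))
          + tsallisEnt q (fun w : Y × Z => ∑ x, p (x, w.1, w.2))
          - tsallisEnt q (fun z => ∑ x, ∑ y, p (x, y, z))
          - tsallisEnt q p := by
  classical
  have hq0 : q ≠ 0 := by positivity
  have hq1'' : 1 - q ≠ 0 := by intro h; linarith
  set dXr : ℝ := (Fintype.card X : ℝ) with hdXr
  set dYr : ℝ := (Fintype.card Y : ℝ) with hdYr
  have hX0 : (0:ℝ) < dXr := by rw [hdXr]; exact_mod_cast hdX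
  have hY0 : (0:ℝ) < dYr := by rw [hdYr]; exact_mod_cast hdY
  set v : ℝ := (dXr * dYr)⁻¹ with hv
  have hv0 : 0 < v := by positivity
  refine ⟨fun t => if t.2.2 = z0 then v else 0, fun t => by dsimp only; split <;> simp [hv0.le],
    ?_, ?_, ?_⟩
  · -- sums to 1
    rw [Fintype.sum_prod_type]
    simp only [Fintype.sum_prod_type]
    simp [Finset.sum_ite_eq', Finset.sum_const, Finset.card_univ, nsmul_eq_mul, hv]
    field_simp
    rw [hdXr, hdYr]; ring
  · -- conditional independence
    intro x y z
    by_cases hz : z = z0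
    · simp only [hz, if_pos rfl, Finset.sum_const, Finset.card_univ, nsmul_eq_mul]
      push_cast
      ring
    · simp [hz]
  · -- the value
    have hmA : ∀ z : Z, (∑ y : Y, if z = z0 then v else 0) = (if z = z0 then dYr * v else 0) := by
      intro z
      by_cases hz : z = z0 <;> simp [hz, Finset.sum_const, Finset.card_univ, nsmul_eq_mul, hdYr]
    have hmB : ∀ z : Z, (∑ x : X, if z = z0 then v else 0) = (if z = z0 then dXr * v else 0) := by
      intro z
      by_cases hz : z = z0 <;> simp [hz, Finset.sum_const, Finset.card_univ, nsmul_eq_mul, hdXr]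
    have hc1 : dXr * dYr * v = 1 := by rw [hv]; exact mul_inv_cancel₀ (mul_pos hX0 hY0).ne'
    have hf1 : (fun w : X × Z => ∑ y, (fun t : X × Y × Z => if t.2.2 = z0 then v else 0) (w.1, y, w.2))
        = fun w : X × Z => if w.2 = z0 then dYr * v else 0 := funext fun w => hmA w.2
    have hf2 : (fun w : Y × Z => ∑ x, (fun t : X × Y × Z => if t.2.2 = z0 then v else 0) (x, w.1, w.2))
        = fun w : Y × Z => if w.2 = z0 then dXr * v else 0 := funext fun w => hmB w.2
    have hf3 : (fun z : Z => ∑ x : X, ∑ y : Y, (fun t : X × Y × Z => if t.2.2 = z0 then v else 0) (x, y, z))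
        = fun z : Z => if z = z0 then (1:ℝ) else 0 := by
      funext z
      by_cases hz : z = z0
      · subst hz
        simp only [if_pos rfl, Finset.sum_const, Finset.card_univ, nsmul_eq_mul]
        rw [hv, hdXr, hdYr]
        simp only [↓reduceIte]; rw [← mul_assoc]; exact mul_inv_cancel₀ (mul_pos hX0 hY0).ne'
      · simp [hz]
    have T1 : tsallisEnt q (fun w : X × Z => if w.2 = z0 then dYr * v else 0)
        = (1 / (1 - q)) * (dXr * (dYr * v) ^ q - 1) := by
      rw [tsallisEnt_eq hq0 _ (fun w => by split <;> positivity)]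
      congr 2
      rw [Fintype.sum_prod_type]
      simp [apply_ite (fun t : ℝ => t ^ q), Real.zero_rpow hq0, Finset.sum_ite_eq',
        Finset.sum_const, Finset.card_univ, nsmul_eq_mul, hdXr]
    have T2 : tsallisEnt q (fun w : Y × Z => if w.2 = z0 then dXr * v else 0)
        = (1 / (1 - q)) * (dYr * (dXr * v) ^ q - 1) := by
      rw [tsallisEnt_eq hq0 _ (fun w => by split <;> positivity)]
      congr 2
      rw [Fintype.sum_prod_type]
      simp [apply_ite (fun t : ℝ => t ^ q), Real.zero_rpow hq0, Finset.sum_ite_eq',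
        Finset.sum_const, Finset.card_univ, nsmul_eq_mul, hdYr]
    have T3 : tsallisEnt q (fun z : Z => if z = z0 then (1:ℝ) else 0)
        = (1 / (1 - q)) * (1 - 1) := by
      rw [tsallisEnt_eq hq0 _ (fun w => by split <;> norm_num)]
      congr 2
      simp [apply_ite (fun t : ℝ => t ^ q), Real.zero_rpow hq0, Real.one_rpow,
        Finset.sum_ite_eq']
    have T4 : tsallisEnt q (fun t : X × Y × Z => if t.2.2 = z0 then v else 0)
        = (1 / (1 - q)) * (dXr * dYr * v ^ q - 1) := by
      rw [tsallisEnt_eq hq0 _ (fun t => by split <;> positivity)]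
      congr 2
      rw [Fintype.sum_prod_type]
      simp only [Fintype.sum_prod_type]
      simp [apply_ite (fun t : ℝ => t ^ q), Real.zero_rpow hq0, Finset.sum_ite_eq',
        Finset.sum_const, Finset.card_univ, nsmul_eq_mul, hdXr, hdYr]
      ring
    rw [hf1, hf2, hf3, T1, T2, T3, T4]
    -- now pure algebra
    have hYv : dYr * v = dXr⁻¹ := by rw [hv, mul_inv, mul_left_comm, mul_inv_cancel₀ hY0.ne', mul_one]
    have hXv : dXr * v = dYr⁻¹ := by rw [hv, mul_inv, ← mul_assoc, mul_inv_cancel₀ hX0.ne', one_mul]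
    have e1 : dXr * (dYr * v) ^ q = dXr ^ (1 - q) := by
      rw [hYv, Real.rpow_sub hX0, Real.rpow_one, Real.inv_rpow hX0.le, div_eq_mul_inv]
    have e2 : dYr * (dXr * v) ^ q = dYr ^ (1 - q) := by
      rw [hXv, Real.rpow_sub hY0, Real.rpow_one, Real.inv_rpow hY0.le, div_eq_mul_inv]
    have e3 : dXr * dYr * v ^ q = dXr ^ (1 - q) * dYr ^ (1 - q) := by
      have hvq : v ^ q = ((dXr * dYr) ^ q)⁻¹ := by rw [hv, ← Real.inv_rpow (by positivity)]
      rw [hvq, ← Real.mul_rpow hX0.le hY0.le, Real.rpow_sub (by positivity), Real.rpow_one,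
        div_eq_mul_inv]
    have hq1' : q - 1 ≠ 0 := by intro h; nlinarith
    rw [e1, e2, e3, fBound]
    field_simp
    ring

private lemma attain2 {X Y : Type*} [Fintype X] [Fintype Y]
    (hdX : 1 ≤ Fintype.card X) (hdY : 1 ≤ Fintype.card Y) {q : ℝ} (hq : 1 < q) :
    ∃ p : X × Y → ℝ, (∀ t, 0 ≤ p t) ∧ (∑ t, p t = 1) ∧
      (∀ x y, p (x, y) = (∑ y', p (x, y')) * (∑ x', p (x', y))) ∧
      fBound q (Fintype.card X) (Fintype.card Y)
        = tsallisEnt q (fun x => ∑ y, p (x, y))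
          + tsallisEnt q (fun y => ∑ x, p (x, y))
          - tsallisEnt q p := by
  classical
  have hq0 : q ≠ 0 := by positivity
  have hq1'' : 1 - q ≠ 0 := by intro h; linarith
  have hq1' : q - 1 ≠ 0 := by intro h; linarith
  set dXr : ℝ := (Fintype.card X : ℝ) with hdXr
  set dYr : ℝ := (Fintype.card Y : ℝ) with hdYr
  have hX0 : (0:ℝ) < dXr := by rw [hdXr]; exact_mod_cast hdX
  have hY0 : (0:ℝ) < dYr := by rw [hdYr]; exact_mod_cast hdY
  set v : ℝ := (dXr * dYr)⁻¹ with hv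
  have hv0 : 0 < v := by positivity
  refine ⟨fun _ => v, fun t => hv0.le, ?_, ?_, ?_⟩
  · simp only [Finset.sum_const, Finset.card_univ, Fintype.card_prod, nsmul_eq_mul, hv]
    push_cast
    rw [hdXr, hdYr]
    field_simp
  · intro x y
    simp only [Finset.sum_const, Finset.card_univ, nsmul_eq_mul]
    rw [hv, hdXr, hdYr]
    field_simp
  · have hf1 : (fun x : X => ∑ _y : Y, v) = fun _ : X => dYr * v := by
      funext x; simp [Finset.sum_const, Finset.card_univ, nsmul_eq_mul, hdYr]
    have hf2 : (fun y : Y => ∑ _x : X, v) = fun _ : Y => dXr * v := by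
      funext y; simp [Finset.sum_const, Finset.card_univ, nsmul_eq_mul, hdXr]
    have T1 : tsallisEnt q (fun _ : X => dYr * v) = (1 / (1 - q)) * (dXr * (dYr * v) ^ q - 1) := by
      rw [tsallisEnt_eq hq0 _ (fun _ => by positivity)]
      congr 2
      simp [Finset.sum_const, Finset.card_univ, nsmul_eq_mul, hdXr]
    have T2 : tsallisEnt q (fun _ : Y => dXr * v) = (1 / (1 - q)) * (dYr * (dXr * v) ^ q - 1) := by
      rw [tsallisEnt_eq hq0 _ (fun _ => by positivity)]
      congr 2
      simp [Finset.sum_const, Finset.card_univ, nsmul_eq_mul, hdYr]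
    have T3 : tsallisEnt q (fun _ : X × Y => v) = (1 / (1 - q)) * (dXr * dYr * v ^ q - 1) := by
      rw [tsallisEnt_eq hq0 _ (fun _ => hv0.le)]
      congr 2
      simp only [Finset.sum_const, Finset.card_univ, Fintype.card_prod, nsmul_eq_mul]
      push_cast
      rw [hdXr, hdYr]
    have hYv : dYr * v = dXr⁻¹ := by rw [hv, mul_inv, mul_left_comm, mul_inv_cancel₀ hY0.ne', mul_one]
    have hXv : dXr * v = dYr⁻¹ := by rw [hv, mul_inv, ← mul_assoc, mul_inv_cancel₀ hX0.ne', one_mul]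
    have e1 : dXr * (dYr * v) ^ q = dXr ^ (1 - q) := by
      rw [hYv, Real.rpow_sub hX0, Real.rpow_one, Real.inv_rpow hX0.le, div_eq_mul_inv]
    have e2 : dYr * (dXr * v) ^ q = dYr ^ (1 - q) := by
      rw [hXv, Real.rpow_sub hY0, Real.rpow_one, Real.inv_rpow hY0.le, div_eq_mul_inv]
    have e3 : dXr * dYr * v ^ q = dXr ^ (1 - q) * dYr ^ (1 - q) := by
      have hvq : v ^ q = ((dXr * dYr) ^ q)⁻¹ := by rw [hv, ← Real.inv_rpow (by positivity)]
      rw [hvq, ← Real.mul_rpow hX0.le hY0.le, Real.rpow_sub (by positivity), Real.rpow_one,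
        div_eq_mul_inv]
    rw [hf1, hf2, T1, T2, T3, e1, e2, e3, fBound]
    field_simp
    ring

/-- For fixed finite alphabets and any `q > 1`, the maximum of the conditional
Tsallis mutual information `I_q(X:Y|Z)` over all distributions on `X × Y × Z`
satisfying the conditional independence `p_{XY|Z} = p_{X|Z}·p_{Y|Z}` is attained
and equals `f(q,d_X,d_Y)`, and so does the maximum of `I_q(X:Y)` over all
product distributions on `X × Y`. -/
theorem tsallis_cond_mutual_info_isGreatest
    {X Y Z : Type*} [Fintype X] [Fintype Y] [Fintype Z]
    (hdX : 1 ≤ Fintype.card X) (hdY : 1 ≤ Fintype.card Y) (hdZ : 1 ≤ Fintype.card Z)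
    (q : ℝ) (hq : 1 < q) :
    IsGreatest {r : ℝ | ∃ p : X × Y × Z → ℝ, (∀ t, 0 ≤ p t) ∧ (∑ t, p t = 1) ∧
        (∀ x y z, p (x, y, z) * (∑ x', ∑ y', p (x', y', z))
          = (∑ y', p (x, y', z)) * (∑ x', p (x', y, z))) ∧
        r = tsallisEnt q (fun w : X × Z => ∑ y, p (w.1, y, w.2))
            + tsallisEnt q (fun w : Y × Z => ∑ x, p (x, w.1, w.2))
            - tsallisEnt q (fun z => ∑ x, ∑ y, p (x, y, z))
            - tsallisEnt q p}
      (fBound q (Fintype.card X) (Fintype.card Y))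
    ∧ IsGreatest {r : ℝ | ∃ p : X × Y → ℝ, (∀ t, 0 ≤ p t) ∧ (∑ t, p t = 1) ∧
        (∀ x y, p (x, y) = (∑ y', p (x, y')) * (∑ x', p (x', y))) ∧
        r = tsallisEnt q (fun x => ∑ y, p (x, y))
            + tsallisEnt q (fun y => ∑ x, p (x, y))
            - tsallisEnt q p}
      (fBound q (Fintype.card X) (Fintype.card Y)) := by
  obtain ⟨z0⟩ : Nonempty Z := Fintype.card_pos_iff.mp hdZ
  constructor
  · constructor
    · exact attain1 hdX hdY z0 hq
    · rintro r ⟨p, hp0, hp1, hci, rfl⟩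
      exact bound1 hdX hdY hq p hp0 hp1 hci
  · constructor
    · exact attain2 hdX hdY hq
    · rintro r ⟨p, hp0, hp1, hprod, rfl⟩
      exact bound2 hdX hdY hq p hp0 hp1 hprod
end

section
/- There exists a probability distribution p on three binary variables X, Y, Z satisfying the conditional independence p(x,y,z)·p_Z(z) = p_{XZ}(x,z)·p_{YZ}(y,z) for all x, y, z, namely p(x,y,0) = 1/4 and p(x,y,1) = 0 for all x, y ∈ {0,1}, whose order-2 conditional Tsallis mutual information is strictly positive: I_2(X:Y|Z) = 1/4. -/
open Finset

/-- The distribution on three binary variables with `p(x,y,0) = 1/4` and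
`p(x,y,1) = 0`. -/
noncomputable def pCE : Fin 2 × Fin 2 × Fin 2 → ℝ :=
  fun t => if t.2.2 = 0 then 1 / 4 else 0

/-- The distribution `pCE` is a probability distribution satisfying the conditional
independence `p(x,y,z)·p_Z(z) = p_{XZ}(x,z)·p_{YZ}(y,z)` for all `x, y, z`, yet its
order-2 conditional Tsallis mutual information `I_2(X:Y|Z)` equals `1/4 > 0`. -/
theorem tsallis_cond_mutual_info_counterexample :
    (∀ t, 0 ≤ pCE t) ∧ (∑ t, pCE t = 1) ∧
    (∀ x y z, pCE (x, y, z) * (∑ x', ∑ y', pCE (x', y', z))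
      = (∑ y', pCE (x, y', z)) * (∑ x', pCE (x', y, z))) ∧
    tsallisEnt 2 (fun w : Fin 2 × Fin 2 => ∑ y, pCE (w.1, y, w.2))
        + tsallisEnt 2 (fun w : Fin 2 × Fin 2 => ∑ x, pCE (x, w.1, w.2))
        - tsallisEnt 2 (fun z => ∑ x, ∑ y, pCE (x, y, z))
        - tsallisEnt 2 pCE
      = 1 / 4 := by
  refine ⟨fun t => by unfold pCE; split <;> norm_num, ?_, ?_, ?_⟩
  · simp [pCE, Fintype.sum_prod_type, Fin.sum_univ_succ]; norm_num
  · intro x y z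
    fin_cases z <;> simp [pCE, Fin.sum_univ_succ] <;> norm_num
  · unfold tsallisEnt pCE
    simp only [Fin.sum_univ_succ, Fin.sum_univ_zero]
    norm_num [Finset.sum_filter, Fintype.sum_prod_type, Fin.sum_univ_succ]
end

section
/- Let p be a probability distribution on a finite type Z of cardinality k and for each z ∈ Z let ρ^{(z)} be a d_A × d_A density matrix. Let ρ_{AZ} be the classical-quantum state indexed by pairs (a,z), with entries (ρ_{AZ})_{(a,z),(a',z')} = p(z)·(ρ^{(z)})_{a,a'} if z = z' and 0 otherwise. Then for every real q > 0 with q ≠ 1, S_q(ρ_{AZ}) = ∑_{z with p(z)>0} p(z)^q·S_q(ρ^{(z)}) + S_q(p), where S_q(p) is the classical Tsallis entropy of the distribution p. -/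
open Finset Matrix ComplexOrder

/-- Quantum Tsallis entropy of order `q` of a matrix `ρ` (intended: a density
matrix), defined via the eigenvalues of `ρ` when `ρ` is Hermitian, with the sum
restricted to the strictly positive eigenvalues. -/
noncomputable def qTsallis {n : Type*} [Fintype n] [DecidableEq n]
    (q : ℝ) (ρ : Matrix n n ℂ) : ℝ :=
  if h : ρ.IsHermitian then
    (1 / (1 - q)) * ((∑ i ∈ univ.filter (fun i => 0 < h.eigenvalues i),
      h.eigenvalues i ^ q) - 1)
  else 0

section Aux
open Polynomial
variable {n : Type*} [Fintype n] [DecidableEq n]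

private lemma charpoly_unitary_conj' (U D : Matrix n n ℂ) (hU : U * star U = 1) :
    (U * D * star U).charpoly = D.charpoly := by
  have hmap : ∀ A B : Matrix n n ℂ,
      (A * B).map (Polynomial.C : ℂ →+* ℂ[X]) = A.map Polynomial.C * B.map Polynomial.C :=
    fun A B => Matrix.map_mul
  have hcm : charmatrix (U * D * star U)
      = U.map Polynomial.C * charmatrix D * (star U).map Polynomial.C := by
    simp only [charmatrix, RingHom.mapMatrix_apply]
    rw [Matrix.mul_sub, Matrix.sub_mul, ← hmap, ← hmap]
    congr 1
    · rw [(Matrix.scalar_commute (X : ℂ[X]) (fun r => Commute.all _ _)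
        (U.map Polynomial.C)).symm.eq]
      rw [Matrix.mul_assoc, ← hmap, hU]
      simp [Matrix.map_one]
  have hdet1 : (U.map (Polynomial.C : ℂ →+* ℂ[X])).det * ((star U).map Polynomial.C).det = 1 := by
    rw [← Matrix.det_mul, ← hmap, hU]
    simp [Matrix.map_one]
  rw [charpoly, hcm, Matrix.det_mul, Matrix.det_mul, charpoly]
  rw [mul_right_comm, hdet1, one_mul]

private lemma charpoly_diagonal' (d : n → ℂ) :
    (Matrix.diagonal d).charpoly = ∏ i, (X - Polynomial.C (d i)) := by
  have h : charmatrix (Matrix.diagonal d) = Matrix.diagonal fun i => X - Polynomial.C (d i) := by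
    ext i j
    by_cases h : i = j
    · subst h; simp [charmatrix_apply, Matrix.diagonal_apply]
    · simp [charmatrix_apply, Matrix.diagonal_apply, h]
  rw [charpoly, h, Matrix.det_diagonal]

private lemma charpoly_smul_hermitian (A : Matrix n n ℂ) (hA : A.IsHermitian) (c : ℝ) :
    ((c : ℂ) • A).charpoly = ∏ i, (X - Polynomial.C ((c * hA.eigenvalues i : ℝ) : ℂ)) := by
  conv_lhs => rw [hA.spectral_theorem, Unitary.conjStarAlgAut_apply]
  rw [Matrix.mul_assoc, ← mul_smul_comm, ← smul_mul_assoc, ← Matrix.mul_assoc,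
    ← Matrix.diagonal_smul]
  rw [charpoly_unitary_conj' _ _ (Matrix.mem_unitaryGroup_iff.mp hA.eigenvectorUnitary.2),
    charpoly_diagonal']
  refine Finset.prod_congr rfl fun i _ => ?_
  congr 1
  simp only [Pi.smul_apply, Function.comp_apply, smul_eq_mul]
  push_cast
  rfl

private lemma charpoly_hermitian (A : Matrix n n ℂ) (hA : A.IsHermitian) :
    A.charpoly = ∏ i, (X - Polynomial.C ((hA.eigenvalues i : ℝ) : ℂ)) := by
  have h := charpoly_smul_hermitian A hA 1
  simpa using h

private lemma charpoly_blockDiagonal' {o : Type*} [Fintype o] [DecidableEq o]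
    (M : o → Matrix n n ℂ) :
    (Matrix.blockDiagonal M).charpoly = ∏ z, (M z).charpoly := by
  have h : charmatrix (Matrix.blockDiagonal M)
      = Matrix.blockDiagonal fun z => charmatrix (M z) := by
    ext ⟨i, z⟩ ⟨j, z'⟩
    by_cases hz : z = z'
    · subst hz
      by_cases hij : i = j
      · subst hij; simp [charmatrix_apply, Matrix.blockDiagonal_apply, Matrix.diagonal_apply]
      · simp [charmatrix_apply, Matrix.blockDiagonal_apply, Matrix.diagonal_apply,
          Prod.ext_iff, hij]
    · simp [charmatrix_apply, Matrix.blockDiagonal_apply, Matrix.diagonal_apply,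
        Prod.ext_iff, hz]
  rw [charpoly, h, Matrix.det_blockDiagonal]
  rfl

end Aux

/-- For a classical-quantum state `ρ_{AZ} = ∑_z p(z) ρ^{(z)} ⊗ |z⟩⟨z|`, the
quantum Tsallis entropy satisfies
`S_q(ρ_{AZ}) = ∑_{z : p(z)>0} p(z)^q S_q(ρ^{(z)}) + S_q(p)` for all `q > 0`,
`q ≠ 1`. -/
theorem quantum_tsallis_cq_state_entropy
    {dA : ℕ} {Z : Type*} [Fintype Z] [DecidableEq Z]
    (p : Z → ℝ) (hp0 : ∀ z, 0 ≤ p z) (hp1 : ∑ z, p z = 1)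
    (ρ : Z → Matrix (Fin dA) (Fin dA) ℂ)
    (hρ : ∀ z, (ρ z).PosSemidef) (hρ1 : ∀ z, (ρ z).trace = 1)
    (q : ℝ) (hq : 0 < q) (hq1 : q ≠ 1) :
    qTsallis q (Matrix.of fun (az az' : Fin dA × Z) =>
        if az.2 = az'.2 then (p az.2 : ℂ) * ρ az.2 az.1 az'.1 else 0)
      = (∑ z ∈ univ.filter (fun z => 0 < p z), p z ^ q * qTsallis q (ρ z))
        + tsallisEnt q p := by
  classical
  -- the cq-state is a block diagonal matrix
  have hMeq : (Matrix.of fun (az az' : Fin dA × Z) =>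
        if az.2 = az'.2 then (p az.2 : ℂ) * ρ az.2 az.1 az'.1 else 0)
      = Matrix.blockDiagonal (fun z => (p z : ℂ) • ρ z) := by
    ext ⟨a, z⟩ ⟨a', z'⟩
    simp [Matrix.blockDiagonal_apply, Matrix.smul_apply, smul_eq_mul]
  have hBH : ∀ z : Z, ((p z : ℂ) • ρ z).IsHermitian := by
    intro z
    rw [Matrix.IsHermitian, Matrix.conjTranspose_smul, (hρ z).1]
    congr 1
    simp
  have hH : (Matrix.blockDiagonal (fun z => (p z : ℂ) • ρ z)).IsHermitian := by
    rw [Matrix.IsHermitian, Matrix.blockDiagonal_conjTranspose]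
    exact congrArg Matrix.blockDiagonal (funext fun z => hBH z)
  have hμ0 : ∀ (z : Z) (i : Fin dA), 0 ≤ (hρ z).1.eigenvalues i :=
    fun z i => (hρ z).eigenvalues_nonneg i
  -- charpoly computations
  have hcp : (Matrix.blockDiagonal (fun z => (p z : ℂ) • ρ z)).charpoly
      = ∏ iz : Fin dA × Z,
          (Polynomial.X - Polynomial.C ((p iz.2 * (hρ iz.2).1.eigenvalues iz.1 : ℝ) : ℂ)) := by
    rw [charpoly_blockDiagonal']
    rw [Fintype.prod_prod_type_right]
    refine Finset.prod_congr rfl fun z _ => charpoly_smul_hermitian (ρ z) (hρ z).1 (p z)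
  have hcp2 : (Matrix.blockDiagonal (fun z => (p z : ℂ) • ρ z)).charpoly
      = ∏ iz : Fin dA × Z, (Polynomial.X - Polynomial.C ((hH.eigenvalues iz : ℝ) : ℂ)) :=
    charpoly_hermitian _ hH
  -- multiset of eigenvalues
  have hprodroots : ∀ f : Fin dA × Z → ℝ,
      (∏ iz : Fin dA × Z, (Polynomial.X - Polynomial.C ((f iz : ℝ) : ℂ))).roots
        = (univ.val.map fun iz => ((f iz : ℝ) : ℂ)) := by
    intro f
    have h : (∏ iz : Fin dA × Z, (Polynomial.X - Polynomial.C ((f iz : ℝ) : ℂ)))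
        = ((univ.val.map fun iz => ((f iz : ℝ) : ℂ)).map
            fun a => Polynomial.X - Polynomial.C a).prod := by
      rw [Multiset.map_map]; rfl
    rw [h, Polynomial.roots_multiset_prod_X_sub_C]
  have hmc : (univ.val.map fun iz => ((hH.eigenvalues iz : ℝ) : ℂ))
      = (univ.val.map fun iz : Fin dA × Z => ((p iz.2 * (hρ iz.2).1.eigenvalues iz.1 : ℝ) : ℂ)) := by
    have h := congrArg Polynomial.roots (hcp2.symm.trans hcp)
    rwa [hprodroots, hprodroots] at h
  have hms : (univ.val.map hH.eigenvalues)
      = (univ.val.map fun iz : Fin dA × Z => p iz.2 * (hρ iz.2).1.eigenvalues iz.1) := by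
    apply Multiset.map_injective Complex.ofReal_injective
    rw [Multiset.map_map, Multiset.map_map]
    exact hmc
  -- sum over eigenvalues
  have key : (∑ iz ∈ univ.filter (fun iz => 0 < hH.eigenvalues iz), hH.eigenvalues iz ^ q)
      = ∑ iz : Fin dA × Z,
          (if 0 < p iz.2 * (hρ iz.2).1.eigenvalues iz.1
            then (p iz.2 * (hρ iz.2).1.eigenvalues iz.1) ^ q else 0) := by
    rw [Finset.sum_filter]
    have h1 : (∑ iz : Fin dA × Z, (if 0 < hH.eigenvalues iz then hH.eigenvalues iz ^ q else 0))
        = ((univ.val.map hH.eigenvalues).map fun x => if 0 < x then x ^ q else 0).sum := by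
      rw [Multiset.map_map]; rfl
    have h2 : (∑ iz : Fin dA × Z,
          (if 0 < p iz.2 * (hρ iz.2).1.eigenvalues iz.1
            then (p iz.2 * (hρ iz.2).1.eigenvalues iz.1) ^ q else 0))
        = (((univ.val.map fun iz : Fin dA × Z => p iz.2 * (hρ iz.2).1.eigenvalues iz.1)).map
            fun x => if 0 < x then x ^ q else 0).sum := by
      rw [Multiset.map_map]; rfl
    rw [h1, h2, hms]
  have key2 : (∑ iz : Fin dA × Z,
        (if 0 < p iz.2 * (hρ iz.2).1.eigenvalues iz.1
          then (p iz.2 * (hρ iz.2).1.eigenvalues iz.1) ^ q else 0))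
      = ∑ z ∈ univ.filter (fun z => 0 < p z),
          p z ^ q * ∑ i ∈ univ.filter (fun i => 0 < (hρ z).1.eigenvalues i),
            (hρ z).1.eigenvalues i ^ q := by
    rw [Fintype.sum_prod_type_right, Finset.sum_filter]
    refine Finset.sum_congr rfl fun z _ => ?_
    by_cases hz : 0 < p z
    · rw [if_pos hz, Finset.sum_filter, Finset.mul_sum]
      refine Finset.sum_congr rfl fun i _ => ?_
      by_cases hi : 0 < (hρ z).1.eigenvalues i
      · rw [if_pos (mul_pos hz hi), if_pos hi, Real.mul_rpow hz.le (hμ0 z i)]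
      · have h0 : (hρ z).1.eigenvalues i = 0 := le_antisymm (not_lt.mp hi) (hμ0 z i)
        simp [h0]
    · have h0 : p z = 0 := le_antisymm (not_lt.mp hz) (hp0 z)
      rw [if_neg hz]
      refine Finset.sum_eq_zero fun i _ => ?_
      rw [h0, zero_mul, if_neg (lt_irrefl 0)]
  -- unfold everything
  rw [hMeq, qTsallis, dif_pos hH, key, key2, tsallisEnt]
  have hcongr : (∑ z ∈ univ.filter (fun z => 0 < p z), p z ^ q * qTsallis q (ρ z))
      = ∑ z ∈ univ.filter (fun z => 0 < p z),
          p z ^ q * ((1 / (1 - q)) *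
            ((∑ i ∈ univ.filter (fun i => 0 < (hρ z).1.eigenvalues i),
              (hρ z).1.eigenvalues i ^ q) - 1)) := by
    refine Finset.sum_congr rfl fun z _ => ?_
    rw [qTsallis, dif_pos (hρ z).1]
  rw [hcongr]
  have expand : (∑ z ∈ univ.filter (fun z => 0 < p z),
        p z ^ q * ((1 / (1 - q)) *
          ((∑ i ∈ univ.filter (fun i => 0 < (hρ z).1.eigenvalues i),
            (hρ z).1.eigenvalues i ^ q) - 1)))
      = (1 / (1 - q)) * ((∑ z ∈ univ.filter (fun z => 0 < p z),
          p z ^ q * ∑ i ∈ univ.filter (fun i => 0 < (hρ z).1.eigenvalues i),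
            (hρ z).1.eigenvalues i ^ q)
        - ∑ z ∈ univ.filter (fun z => 0 < p z), p z ^ q) := by
    rw [← Finset.sum_sub_distrib, Finset.mul_sum]
    exact Finset.sum_congr rfl fun z _ => by ring
  rw [expand]
  ring
end

section
/- Let p be a probability distribution on a finite type C of cardinality k and for each c ∈ C let ρ_A^{(c)} and ρ_B^{(c)} be density matrices of sizes d_A × d_A and d_B × d_B. Let ρ_{ABC} be the state indexed by triples (a,b,c) with entries (ρ_{ABC})_{(a,b,c),(a',b',c')} = p(c)·(ρ_A^{(c)})_{a,a'}·(ρ_B^{(c)})_{b,b'} if c = c' and 0 otherwise. Then for every real q > 1, the conditional quantum Tsallis mutual information satisfies I_q(A:B|C) = S_q(ρ_{AC}) + S_q(ρ_{BC}) − S_q(ρ_C) − S_q(ρ_{ABC}) ≤ f(q,d_A,d_B), where ρ_{AC}, ρ_{BC}, ρ_C are the partial traces of ρ_{ABC}; moreover I_q(A:B|C) = ∑_{c with p(c)>0} p(c)^q·(S_q(ρ_A^{(c)}) + S_q(ρ_B^{(c)}) − S_q(ρ_A^{(c)} ⊗ ρ_B^{(c)})). -/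
open Finset Matrix Kronecker ComplexOrder

/-- Partial trace over the second factor of a tripartite matrix. -/
noncomputable def ptraceB {α β γ : Type*} [Fintype β]
    (ρ : Matrix (α × β × γ) (α × β × γ) ℂ) : Matrix (α × γ) (α × γ) ℂ :=
  Matrix.of fun w w' => ∑ b, ρ (w.1, b, w.2) (w'.1, b, w'.2)

/-- Partial trace over the first factor of a tripartite matrix. -/
noncomputable def ptraceA {α β γ : Type*} [Fintype α]
    (ρ : Matrix (α × β × γ) (α × β × γ) ℂ) : Matrix (β × γ) (β × γ) ℂ :=
  Matrix.of fun w w' => ∑ a, ρ (a, w.1, w.2) (a, w'.1, w'.2)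

/-- Partial trace over the first two factors of a tripartite matrix. -/
noncomputable def ptraceAB {α β γ : Type*} [Fintype α] [Fintype β]
    (ρ : Matrix (α × β × γ) (α × β × γ) ℂ) : Matrix γ γ ℂ :=
  Matrix.of fun c c' => ∑ a, ∑ b, ρ (a, b, c) (a, b, c')

section Aux
open Polynomial
namespace QTaux

variable {n : Type*} [Fintype n] [DecidableEq n]

lemma charpoly_conj (U A : Matrix n n ℂ) (hU : U * Uᴴ = 1) :
    (U * A * Uᴴ).charpoly = A.charpoly := by
  have hmap : ∀ (M N : Matrix n n ℂ),
      (M * N).map (C : ℂ →+* ℂ[X]) = M.map C * N.map C := fun M N => by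
    simpa [RingHom.mapMatrix_apply] using
      (RingHom.mapMatrix (C : ℂ →+* ℂ[X])).map_mul M N
  have h1 : charmatrix (U * A * Uᴴ) = U.map C * charmatrix A * Uᴴ.map C := by
    simp only [charmatrix, RingHom.mapMatrix_apply]
    rw [Matrix.mul_sub, Matrix.sub_mul, hmap, hmap]
    congr 1
    rw [scalar_apply, Matrix.mul_assoc, ← Matrix.smul_eq_diagonal_mul, Matrix.mul_smul,
      ← hmap, hU]
    rw [Matrix.map_one _ (map_zero C) (map_one C), Matrix.smul_eq_diagonal_mul, Matrix.mul_one]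
  have h2 : (U.map (C : ℂ →+* ℂ[X])).det * ((Uᴴ).map (C : ℂ →+* ℂ[X])).det = 1 := by
    rw [← Matrix.det_mul, ← hmap, hU]
    simp
  rw [Matrix.charpoly, Matrix.charpoly, h1, Matrix.det_mul, Matrix.det_mul]
  ring_nf
  rw [mul_comm, ← mul_assoc, mul_comm ((Uᴴ).map _).det, h2, one_mul]

lemma charpoly_diagonal (v : n → ℂ) :
    (Matrix.diagonal v).charpoly = ∏ i, (X - C (v i)) := by
  have h : charmatrix (Matrix.diagonal v) = Matrix.diagonal (fun i => (X : ℂ[X]) - C (v i)) := by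
    ext i j
    by_cases h : i = j
    · subst h; simp
    · simp [Matrix.diagonal_apply_ne _ h, charmatrix_apply_ne _ _ _ h]
  rw [Matrix.charpoly, h, Matrix.det_diagonal]

lemma isHermitian_of_rep (U : Matrix n n ℂ) (d : n → ℝ) :
    (U * Matrix.diagonal (fun i => (d i : ℂ)) * Uᴴ).IsHermitian := by
  unfold Matrix.IsHermitian
  rw [conjTranspose_mul, conjTranspose_mul, conjTranspose_conjTranspose,
    Matrix.diagonal_conjTranspose, Matrix.mul_assoc]
  congr 2
  simp [Function.comp]


lemma eig_multiset {A : Matrix n n ℂ} (hA : A.IsHermitian)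
    (U : Matrix n n ℂ) (d : n → ℝ) (hU : U * Uᴴ = 1)
    (hrep : A = U * Matrix.diagonal (fun i => (d i : ℂ)) * Uᴴ) :
    Multiset.map hA.eigenvalues Finset.univ.val = Multiset.map d Finset.univ.val := by
  have h1 : A.charpoly = ∏ i, (X - C ((d i : ℂ))) := by
    rw [hrep, charpoly_conj _ _ hU, charpoly_diagonal]
  have hUe : (hA.eigenvectorUnitary : Matrix n n ℂ) * (hA.eigenvectorUnitary : Matrix n n ℂ)ᴴ
      = 1 := by
    rw [← Matrix.star_eq_conjTranspose]
    exact (Matrix.mem_unitaryGroup_iff).mp hA.eigenvectorUnitary.2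
  have h2 : A.charpoly = ∏ i, (X - C ((hA.eigenvalues i : ℂ))) := by
    conv_lhs => rw [hA.spectral_theorem, Unitary.conjStarAlgAut_apply, Matrix.star_eq_conjTranspose]
    rw [charpoly_conj _ _ hUe,
      show (RCLike.ofReal ∘ hA.eigenvalues : n → ℂ) = fun i => ((hA.eigenvalues i : ℝ) : ℂ)
        from rfl, charpoly_diagonal]
  have h3 : Multiset.map (fun i => ((hA.eigenvalues i : ℝ) : ℂ)) Finset.univ.val
      = Multiset.map (fun i => ((d i : ℝ) : ℂ)) Finset.univ.val := by
    have e1 := Polynomial.roots_multiset_prod_X_sub_C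
      (Multiset.map (fun i => ((hA.eigenvalues i : ℝ) : ℂ)) Finset.univ.val)
    have e2 := Polynomial.roots_multiset_prod_X_sub_C
      (Multiset.map (fun i => ((d i : ℝ) : ℂ)) Finset.univ.val)
    rw [Multiset.map_map] at e1 e2
    have hp1 : ((Finset.univ.val.map fun i => X - C ((hA.eigenvalues i : ℝ) : ℂ))).prod
        = ((Finset.univ.val.map fun i => X - C ((d i : ℝ) : ℂ))).prod := by
      rw [← Finset.prod_eq_multiset_prod, ← Finset.prod_eq_multiset_prod, ← h2, ← h1]
    rw [← e1, ← e2]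
    simp only [Function.comp] at hp1 ⊢
    rw [hp1]
  have h4 := congrArg (Multiset.map Complex.re) h3
  simpa [Multiset.map_map, Function.comp] using h4

omit [DecidableEq n] in
lemma sum_rpow_filter (e : n → ℝ) (q : ℝ) :
    ∑ i ∈ Finset.univ.filter (fun i => 0 < e i), e i ^ q
      = (((Multiset.map e Finset.univ.val).filter (fun x => 0 < x)).map
          (fun x => x ^ q)).sum := by
  rw [Multiset.filter_map, Multiset.map_map, Finset.sum, Finset.filter_val]
  rfl

omit [DecidableEq n] in
lemma sum_rpow_eq {m : Type*} [Fintype m] {e : n → ℝ} {d : m → ℝ}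
    (h : Multiset.map e Finset.univ.val = Multiset.map d Finset.univ.val)
    {q : ℝ} (hq : 0 < q) (hd : ∀ i, 0 ≤ d i) :
    ∑ i ∈ Finset.univ.filter (fun i => 0 < e i), e i ^ q = ∑ i, d i ^ q := by
  rw [sum_rpow_filter, h, ← sum_rpow_filter, Finset.sum_filter]
  refine Finset.sum_congr rfl fun i _ => ?_
  by_cases hdi : 0 < d i
  · simp [hdi]
  · have h0 : d i = 0 := le_antisymm (not_lt.mp hdi) (hd i)
    simp [hdi, h0, Real.zero_rpow hq.ne']

lemma qTsallis_rep {q : ℝ} (hq : 1 < q)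
    (A : Matrix n n ℂ) (U : Matrix n n ℂ) (d : n → ℝ) (hU : U * Uᴴ = 1)
    (hd : ∀ i, 0 ≤ d i)
    (hrep : A = U * Matrix.diagonal (fun i => (d i : ℂ)) * Uᴴ) :
    qTsallis q A = (1 / (1 - q)) * ((∑ i, d i ^ q) - 1) := by
  have hA : A.IsHermitian := hrep ▸ isHermitian_of_rep U d
  have hm := eig_multiset hA U d hU hrep
  rw [qTsallis, dif_pos hA, sum_rpow_eq hm (lt_trans one_pos hq) hd]

lemma block_unitary {Cc : Type*} [Fintype Cc] [DecidableEq Cc]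
    (V : Cc → Matrix n n ℂ) (hV : ∀ c, V c * (V c)ᴴ = 1) :
    (Matrix.of (fun (x y : n × Cc) => if x.2 = y.2 then V x.2 x.1 y.1 else 0)
      * (Matrix.of (fun (x y : n × Cc) => if x.2 = y.2 then V x.2 x.1 y.1 else 0))ᴴ)
      = 1 := by
  ext ⟨a, c⟩ ⟨a', c'⟩
  rw [Matrix.mul_apply, Fintype.sum_prod_type]
  simp only [conjTranspose_apply, Matrix.of_apply, apply_ite (star : ℂ → ℂ), star_zero, ite_mul, zero_mul,
    mul_ite, mul_zero]
  by_cases hcc : c' = c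
  · subst hcc
    simp only [Finset.sum_ite_eq, Finset.mem_univ, if_true]
    have h2 : ∑ b, V c' a b * star (V c' a' b) = (V c' * (V c')ᴴ) a a' := by
      rw [Matrix.mul_apply]; simp [conjTranspose_apply]
    rw [h2, hV, Matrix.one_apply, Matrix.one_apply]
    by_cases ha : a = a' <;> simp [ha, Prod.ext_iff]
  · have hz : ∀ x : n, (if c = c' then V c a x * star (V c' a' x) else 0) = 0 :=
      fun x => if_neg (fun h => hcc h.symm)
    simp only [Finset.sum_ite_eq, Finset.mem_univ, if_true, hz, Finset.sum_const_zero]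
    rw [Matrix.one_apply_ne (by simp [Prod.ext_iff]; exact fun _ h => (hcc h.symm).elim)]

lemma block_rep {Cc : Type*} [Fintype Cc] [DecidableEq Cc]
    (V : Cc → Matrix n n ℂ)
    (σ : Cc → Matrix n n ℂ) (g : Cc → n → ℝ)
    (hσ : ∀ c, σ c = V c * Matrix.diagonal (fun a => ((g c a : ℝ) : ℂ)) * (V c)ᴴ)
    (w : Cc → ℝ)
    (M : Matrix (n × Cc) (n × Cc) ℂ)
    (hM : ∀ a c a' c', M (a, c) (a', c') = if c = c' then (w c : ℂ) * σ c a a' else 0) :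
    M = Matrix.of (fun (x y : n × Cc) => if x.2 = y.2 then V x.2 x.1 y.1 else 0)
      * Matrix.diagonal (fun x : n × Cc => ((w x.2 * g x.2 x.1 : ℝ) : ℂ))
      * (Matrix.of (fun (x y : n × Cc) => if x.2 = y.2 then V x.2 x.1 y.1 else 0))ᴴ := by
  have hσ' : ∀ c a a', σ c a a' = ∑ b, V c a b * (g c b : ℂ) * star (V c a' b) := by
    intro c a a'
    rw [hσ c, Matrix.mul_apply]
    simp [Matrix.mul_diagonal, conjTranspose_apply]
  ext ⟨a, c⟩ ⟨a', c'⟩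
  rw [Matrix.mul_apply, Fintype.sum_prod_type, hM]
  simp only [Matrix.mul_diagonal, conjTranspose_apply, Matrix.of_apply,
    apply_ite (star : ℂ → ℂ), star_zero, ite_mul, zero_mul, mul_ite, mul_zero]
  by_cases hcc : c = c'
  · subst hcc
    simp only [Finset.sum_ite_eq, Finset.mem_univ, if_true, if_pos rfl]
    rw [hσ', Finset.mul_sum]
    refine Finset.sum_congr rfl fun b _ => ?_
    push_cast
    ring
  · simp only [Finset.sum_ite_eq, Finset.mem_univ, if_true, if_neg hcc,
      Finset.sum_const_zero]

lemma block_unitary2 {n₂ Cc : Type*} [Fintype n₂] [DecidableEq n₂] [Fintype Cc] [DecidableEq Cc]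
    (V : Cc → Matrix n n ℂ) (hV : ∀ c, V c * (V c)ᴴ = 1)
    (W : Cc → Matrix n₂ n₂ ℂ) (hW : ∀ c, W c * (W c)ᴴ = 1) :
    (Matrix.of (fun (x y : n × n₂ × Cc) =>
        if x.2.2 = y.2.2 then V x.2.2 x.1 y.1 * W x.2.2 x.2.1 y.2.1 else 0)
      * (Matrix.of (fun (x y : n × n₂ × Cc) =>
        if x.2.2 = y.2.2 then V x.2.2 x.1 y.1 * W x.2.2 x.2.1 y.2.1 else 0))ᴴ) = 1 := by
  ext ⟨a, b, c⟩ ⟨a', b', c'⟩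
  rw [Matrix.mul_apply, Fintype.sum_prod_type]
  simp only [Fintype.sum_prod_type, conjTranspose_apply, Matrix.of_apply,
    apply_ite (star : ℂ → ℂ), star_zero, ite_mul, zero_mul, mul_ite, mul_zero]
  by_cases hcc : c' = c
  · subst hcc
    simp only [Finset.sum_ite_eq, Finset.mem_univ, if_true]
    have key : ∑ e : n, ∑ f : n₂,
        V c' a e * W c' b f * star (V c' a' e * W c' b' f)
        = (V c' * (V c')ᴴ) a a' * (W c' * (W c')ᴴ) b b' := by
      rw [Matrix.mul_apply, Matrix.mul_apply, Finset.sum_mul_sum]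
      refine Finset.sum_congr rfl fun e _ => Finset.sum_congr rfl fun f _ => ?_
      simp only [conjTranspose_apply, star_mul']
      ring
    rw [key, hV, hW, Matrix.one_apply, Matrix.one_apply, Matrix.one_apply]
    by_cases ha : a = a' <;> by_cases hb : b = b' <;> simp [ha, hb, Prod.ext_iff]
  · have hz : ∀ (e : n) (f : n₂),
        (if c = c' then V c a e * W c b f * star (V c' a' e * W c' b' f) else 0) = 0 :=
      fun e f => if_neg (fun h => hcc h.symm)
    simp only [Finset.sum_ite_eq, Finset.mem_univ, if_true, hz, Finset.sum_const_zero]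
    rw [Matrix.one_apply_ne (by simp [Prod.ext_iff]; exact fun _ _ h => (hcc h.symm).elim)]

lemma block_rep2 {n₂ Cc : Type*} [Fintype n₂] [DecidableEq n₂] [Fintype Cc] [DecidableEq Cc]
    (V : Cc → Matrix n n ℂ) (W : Cc → Matrix n₂ n₂ ℂ)
    (σ : Cc → Matrix n n ℂ) (g : Cc → n → ℝ)
    (hσ : ∀ c, σ c = V c * Matrix.diagonal (fun a => ((g c a : ℝ) : ℂ)) * (V c)ᴴ)
    (τ : Cc → Matrix n₂ n₂ ℂ) (h : Cc → n₂ → ℝ)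
    (hτ : ∀ c, τ c = W c * Matrix.diagonal (fun b => ((h c b : ℝ) : ℂ)) * (W c)ᴴ)
    (w : Cc → ℝ)
    (M : Matrix (n × n₂ × Cc) (n × n₂ × Cc) ℂ)
    (hM : ∀ a b c a' b' c', M (a, b, c) (a', b', c')
      = if c = c' then (w c : ℂ) * σ c a a' * τ c b b' else 0) :
    M = Matrix.of (fun (x y : n × n₂ × Cc) =>
        if x.2.2 = y.2.2 then V x.2.2 x.1 y.1 * W x.2.2 x.2.1 y.2.1 else 0)
      * Matrix.diagonal (fun x : n × n₂ × Cc =>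
          ((w x.2.2 * g x.2.2 x.1 * h x.2.2 x.2.1 : ℝ) : ℂ))
      * (Matrix.of (fun (x y : n × n₂ × Cc) =>
        if x.2.2 = y.2.2 then V x.2.2 x.1 y.1 * W x.2.2 x.2.1 y.2.1 else 0))ᴴ := by
  have hσ' : ∀ c a a', σ c a a' = ∑ e, V c a e * (g c e : ℂ) * star (V c a' e) := by
    intro c a a'
    rw [hσ c, Matrix.mul_apply]
    simp [Matrix.mul_diagonal, conjTranspose_apply]
  have hτ' : ∀ c b b', τ c b b' = ∑ f, W c b f * (h c f : ℂ) * star (W c b' f) := by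
    intro c b b'
    rw [hτ c, Matrix.mul_apply]
    simp [Matrix.mul_diagonal, conjTranspose_apply]
  ext ⟨a, b, c⟩ ⟨a', b', c'⟩
  rw [Matrix.mul_apply, Fintype.sum_prod_type, hM]
  simp only [Fintype.sum_prod_type, Matrix.mul_diagonal, conjTranspose_apply, Matrix.of_apply,
    apply_ite (star : ℂ → ℂ), star_zero, ite_mul, zero_mul, mul_ite, mul_zero]
  by_cases hcc : c = c'
  · subst hcc
    simp only [Finset.sum_ite_eq, Finset.mem_univ, if_true, if_pos rfl]
    rw [hσ', hτ']
    simp only [Finset.mul_sum, Finset.sum_mul]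
    rw [Finset.sum_comm]
    refine Finset.sum_congr rfl fun e _ => ?_
    refine Finset.sum_congr rfl fun f _ => ?_
    simp only [star_mul']
    push_cast
    ring
  · simp only [Finset.sum_ite_eq, Finset.mem_univ, if_true, if_neg hcc,
      Finset.sum_const_zero]

lemma kron_conjTranspose {n₂ : Type*} [Fintype n₂] (A : Matrix n n ℂ) (B : Matrix n₂ n₂ ℂ) :
    (A ⊗ₖ B)ᴴ = Aᴴ ⊗ₖ Bᴴ := by
  ext ⟨i, j⟩ ⟨k, l⟩
  simp [Matrix.conjTranspose_apply, Matrix.kroneckerMap_apply, star_mul']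

lemma kron_unitary {n₂ : Type*} [Fintype n₂] [DecidableEq n₂]
    (V : Matrix n n ℂ) (hV : V * Vᴴ = 1) (W : Matrix n₂ n₂ ℂ) (hW : W * Wᴴ = 1) :
    (V ⊗ₖ W) * (V ⊗ₖ W)ᴴ = 1 := by
  rw [kron_conjTranspose, ← Matrix.mul_kronecker_mul, hV, hW, Matrix.one_kronecker_one]

lemma kron_rep {n₂ : Type*} [Fintype n₂] [DecidableEq n₂]
    (V : Matrix n n ℂ) (W : Matrix n₂ n₂ ℂ)
    (σ : Matrix n n ℂ) (g : n → ℝ)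
    (hσ : σ = V * Matrix.diagonal (fun a => ((g a : ℝ) : ℂ)) * Vᴴ)
    (τ : Matrix n₂ n₂ ℂ) (h : n₂ → ℝ)
    (hτ : τ = W * Matrix.diagonal (fun b => ((h b : ℝ) : ℂ)) * Wᴴ) :
    σ ⊗ₖ τ = (V ⊗ₖ W)
      * Matrix.diagonal (fun x : n × n₂ => ((g x.1 * h x.2 : ℝ) : ℂ))
      * (V ⊗ₖ W)ᴴ := by
  rw [hσ, hτ, kron_conjTranspose, Matrix.mul_kronecker_mul, Matrix.mul_kronecker_mul,
    Matrix.diagonal_kronecker_diagonal]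
  congr 2
  funext x
  push_cast
  ring

lemma sum_eig_eq_one {A : Matrix n n ℂ} (hA : A.IsHermitian) (htr : A.trace = 1) :
    ∑ i, hA.eigenvalues i = 1 := by
  have hUe : (hA.eigenvectorUnitary : Matrix n n ℂ) * (hA.eigenvectorUnitary : Matrix n n ℂ)ᴴ
      = 1 := by
    rw [← Matrix.star_eq_conjTranspose]
    exact (Matrix.mem_unitaryGroup_iff).mp hA.eigenvectorUnitary.2
  have h2 : A.trace = ∑ i, (hA.eigenvalues i : ℂ) := by
    conv_lhs => rw [hA.spectral_theorem, Unitary.conjStarAlgAut_apply, Matrix.star_eq_conjTranspose]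
    rw [Matrix.trace_mul_cycle, mul_eq_one_comm.mp hUe, Matrix.one_mul,
      Matrix.trace_diagonal]
    rfl
  rw [htr] at h2
  have h3 := congrArg Complex.re h2
  simpa using h3.symm

lemma alpha_bounds {d : ℕ} (e : Fin d → ℝ) (he : ∀ i, 0 ≤ e i) (hs : ∑ i, e i = 1)
    {q : ℝ} (hq : 1 < q) :
    (d : ℝ) ^ (1 - q) ≤ ∑ i, e i ^ q ∧ ∑ i, e i ^ q ≤ 1 := by
  have hd : 0 < d := by
    rcases Nat.eq_zero_or_pos d with h | h
    · subst h; simp at hs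
    · exact h
  have hdR : (0 : ℝ) < d := by exact_mod_cast hd
  constructor
  · have key := Real.rpow_arith_mean_le_arith_mean_rpow Finset.univ
      (fun _ : Fin d => (d : ℝ)⁻¹) (fun i => (d : ℝ) * e i)
      (fun i _ => by positivity) (by simp [Finset.card_univ]; field_simp)
      (fun i _ => mul_nonneg hdR.le (he i)) hq.le
    have h1 : ∑ i, (d : ℝ)⁻¹ * ((d : ℝ) * e i) = 1 := by
      field_simp [← Finset.mul_sum, hs]
      exact hs
    rw [h1, Real.one_rpow] at key
    have h2 : ∑ i, (d : ℝ)⁻¹ * ((d : ℝ) * e i) ^ q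
        = (d : ℝ) ^ (q - 1) * ∑ i, e i ^ q := by
      rw [Finset.mul_sum]
      refine Finset.sum_congr rfl fun i _ => ?_
      rw [Real.mul_rpow hdR.le (he i)]
      have hdq : (d : ℝ)⁻¹ * (d : ℝ) ^ q = (d : ℝ) ^ (q - 1) := by
        rw [← Real.rpow_neg_one (d : ℝ), ← Real.rpow_add hdR]
        ring_nf
      rw [← mul_assoc, hdq]
    rw [h2] at key
    have h3 : (0 : ℝ) < (d : ℝ) ^ (1 - q) := Real.rpow_pos_of_pos hdR _
    calc (d : ℝ) ^ (1 - q) = (d : ℝ) ^ (1 - q) * 1 := (mul_one _).symm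
      _ ≤ (d : ℝ) ^ (1 - q) * ((d : ℝ) ^ (q - 1) * ∑ i, e i ^ q) := by
          exact mul_le_mul_of_nonneg_left key h3.le
      _ = ∑ i, e i ^ q := by
          rw [← mul_assoc, ← Real.rpow_add hdR]
          norm_num
  · calc ∑ i, e i ^ q ≤ ∑ i, e i := by
          refine Finset.sum_le_sum fun i _ => ?_
          rcases eq_or_lt_of_le (he i) with h0 | h0
          · rw [← h0, Real.zero_rpow (by positivity)]
          · have hle : e i ≤ 1 := by
              rw [← hs]
              exact Finset.single_le_sum (fun j _ => he j) (Finset.mem_univ i)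
            simpa using Real.rpow_le_rpow_of_exponent_ge h0 hle hq.le
      _ = 1 := hs


end QTaux

end Aux

set_option maxHeartbeats 2000000 in
open QTaux in
/-- For the state `ρ_{ABC} = ∑_c p(c) ρ_A^{(c)} ⊗ ρ_B^{(c)} ⊗ |c⟩⟨c|` and any
`q > 1`, the conditional quantum Tsallis mutual information
`I_q(A:B|C) = S_q(ρ_{AC}) + S_q(ρ_{BC}) − S_q(ρ_C) − S_q(ρ_{ABC})` is at most
`f(q,d_A,d_B)`, and equals
`∑_{c : p(c)>0} p(c)^q (S_q(ρ_A^{(c)}) + S_q(ρ_B^{(c)}) − S_q(ρ_A^{(c)} ⊗ ρ_B^{(c)}))`. -/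
theorem quantum_tsallis_cond_mutual_info_cq
    {dA dB : ℕ} {C : Type*} [Fintype C] [DecidableEq C]
    (p : C → ℝ) (hp0 : ∀ c, 0 ≤ p c) (hp1 : ∑ c, p c = 1)
    (ρA : C → Matrix (Fin dA) (Fin dA) ℂ) (ρB : C → Matrix (Fin dB) (Fin dB) ℂ)
    (hρA : ∀ c, (ρA c).PosSemidef) (hρB : ∀ c, (ρB c).PosSemidef)
    (hρA1 : ∀ c, (ρA c).trace = 1) (hρB1 : ∀ c, (ρB c).trace = 1)
    (ρABC : Matrix (Fin dA × Fin dB × C) (Fin dA × Fin dB × C) ℂ)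
    (hρABC : ∀ a b c a' b' c', ρABC (a, b, c) (a', b', c')
      = if c = c' then (p c : ℂ) * ρA c a a' * ρB c b b' else 0)
    (q : ℝ) (hq : 1 < q) :
    qTsallis q (ptraceB ρABC) + qTsallis q (ptraceA ρABC)
        - qTsallis q (ptraceAB ρABC) - qTsallis q ρABC
      ≤ fBound q dA dB
    ∧ qTsallis q (ptraceB ρABC) + qTsallis q (ptraceA ρABC)
        - qTsallis q (ptraceAB ρABC) - qTsallis q ρABC
      = ∑ c ∈ univ.filter (fun c => 0 < p c), p c ^ q *
          (qTsallis q (ρA c) + qTsallis q (ρB c) - qTsallis q (ρA c ⊗ₖ ρB c)) := by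
  classical
  have hqne : q ≠ 0 := by linarith
  have hq0 : (0:ℝ) < q - 1 := by linarith
  obtain ⟨c0⟩ : Nonempty C := by
    by_contra h
    rw [not_nonempty_iff] at h
    rw [Finset.univ_eq_empty, Finset.sum_empty] at hp1
    exact zero_ne_one hp1
  -- eigen data
  set eA : C → Fin dA → ℝ := fun c => (hρA c).1.eigenvalues with heAdef
  set eB : C → Fin dB → ℝ := fun c => (hρB c).1.eigenvalues with heBdef
  set VA : C → Matrix (Fin dA) (Fin dA) ℂ :=
    fun c => ((hρA c).1.eigenvectorUnitary : Matrix _ _ ℂ) with hVAdef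
  set VB : C → Matrix (Fin dB) (Fin dB) ℂ :=
    fun c => ((hρB c).1.eigenvectorUnitary : Matrix _ _ ℂ) with hVBdef
  have hVA : ∀ c, VA c * (VA c)ᴴ = 1 := fun c => by
    rw [hVAdef, ← Matrix.star_eq_conjTranspose]
    exact Matrix.mem_unitaryGroup_iff.mp (hρA c).1.eigenvectorUnitary.2
  have hVB : ∀ c, VB c * (VB c)ᴴ = 1 := fun c => by
    rw [hVBdef, ← Matrix.star_eq_conjTranspose]
    exact Matrix.mem_unitaryGroup_iff.mp (hρB c).1.eigenvectorUnitary.2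
  have hrepA : ∀ c, ρA c = VA c * Matrix.diagonal (fun a => ((eA c a : ℝ) : ℂ)) * (VA c)ᴴ :=
    fun c => by
    conv_lhs => rw [(hρA c).1.spectral_theorem, Unitary.conjStarAlgAut_apply, Matrix.star_eq_conjTranspose]
    rfl
  have hrepB : ∀ c, ρB c = VB c * Matrix.diagonal (fun b => ((eB c b : ℝ) : ℂ)) * (VB c)ᴴ :=
    fun c => by
    conv_lhs => rw [(hρB c).1.spectral_theorem, Unitary.conjStarAlgAut_apply, Matrix.star_eq_conjTranspose]
    rfl
  have heA0 : ∀ c a, 0 ≤ eA c a := fun c a => (hρA c).eigenvalues_nonneg a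
  have heB0 : ∀ c b, 0 ≤ eB c b := fun c b => (hρB c).eigenvalues_nonneg b
  have heA1 : ∀ c, ∑ a, eA c a = 1 := fun c => sum_eig_eq_one (hρA c).1 (hρA1 c)
  have heB1 : ∀ c, ∑ b, eB c b = 1 := fun c => sum_eig_eq_one (hρB c).1 (hρB1 c)
  set α : C → ℝ := fun c => ∑ a, eA c a ^ q with hαdef
  set β : C → ℝ := fun c => ∑ b, eB c b ^ q with hβdef
  have hαb : ∀ c, (dA:ℝ) ^ (1-q) ≤ α c ∧ α c ≤ 1 :=
    fun c => alpha_bounds _ (heA0 c) (heA1 c) hq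
  have hβb : ∀ c, (dB:ℝ) ^ (1-q) ≤ β c ∧ β c ≤ 1 :=
    fun c => alpha_bounds _ (heB0 c) (heB1 c) hq
  set t : ℝ := 1 / (1 - q) with htdef
  have htrA : ∀ c, (∑ a, ρA c a a) = (1:ℂ) := fun c => by
    have h : (ρA c).trace = ∑ a, ρA c a a := by simp [Matrix.trace, Matrix.diag]
    rw [← h, hρA1 c]
  have htrB : ∀ c, (∑ b, ρB c b b) = (1:ℂ) := fun c => by
    have h : (ρB c).trace = ∑ b, ρB c b b := by simp [Matrix.trace, Matrix.diag]
    rw [← h, hρB1 c]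
  -- entries of partial traces
  have hACe : ∀ (a : Fin dA) (c : C) (a' : Fin dA) (c' : C),
      ptraceB ρABC (a, c) (a', c') = if c = c' then (p c : ℂ) * ρA c a a' else 0 := by
    intro a c a' c'
    show (∑ b, ρABC (a, b, c) (a', b, c')) = _
    simp_rw [hρABC]
    by_cases h : c = c'
    · subst h
      simp only [eq_self_iff_true, if_true]
      rw [← Finset.mul_sum, htrB c, mul_one]
    · simp [h]
  have hBCe : ∀ (b : Fin dB) (c : C) (b' : Fin dB) (c' : C),
      ptraceA ρABC (b, c) (b', c') = if c = c' then (p c : ℂ) * ρB c b b' else 0 := by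
    intro b c b' c'
    show (∑ a, ρABC (a, b, c) (a, b', c')) = _
    simp_rw [hρABC]
    by_cases h : c = c'
    · subst h
      simp only [eq_self_iff_true, if_true]
      calc ∑ a, (p c : ℂ) * ρA c a a * ρB c b b'
          = (∑ a, ρA c a a) * ((p c : ℂ) * ρB c b b') := by
            rw [Finset.sum_mul]
            exact Finset.sum_congr rfl fun a _ => by ring
        _ = (p c : ℂ) * ρB c b b' := by rw [htrA c, one_mul]
    · simp [h]
  have hCe : ptraceAB ρABC = Matrix.diagonal (fun c => (p c : ℂ)) := by
    ext c c'
    show (∑ a, ∑ b, ρABC (a, b, c) (a, b, c')) = _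
    simp_rw [hρABC]
    by_cases h : c = c'
    · subst h
      rw [Matrix.diagonal_apply_eq]
      simp only [eq_self_iff_true, if_true]
      calc ∑ a, ∑ b, (p c : ℂ) * ρA c a a * ρB c b b
          = ∑ a, (p c : ℂ) * ρA c a a * ∑ b, ρB c b b := by
            exact Finset.sum_congr rfl fun a _ => (Finset.mul_sum _ _ _).symm
        _ = ∑ a, (p c : ℂ) * ρA c a a := by rw [htrB c]; simp
        _ = (p c : ℂ) * ∑ a, ρA c a a := by rw [Finset.mul_sum]
        _ = (p c : ℂ) := by rw [htrA c, mul_one]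
    · rw [Matrix.diagonal_apply_ne _ h]
      simp [h]
  -- the four entropies
  have E1 : qTsallis q (ptraceB ρABC) = t * ((∑ c, p c ^ q * α c) - 1) := by
    have hrep := block_rep VA ρA eA hrepA p (ptraceB ρABC) hACe
    have := qTsallis_rep hq (ptraceB ρABC) _ _ (block_unitary VA hVA)
      (fun x => mul_nonneg (hp0 _) (heA0 _ _)) hrep
    rw [this, htdef]
    congr 1
    congr 1
    rw [Fintype.sum_prod_type, Finset.sum_comm]
    refine Finset.sum_congr rfl fun c _ => ?_
    rw [hαdef, Finset.mul_sum]
    exact Finset.sum_congr rfl fun a _ => Real.mul_rpow (hp0 c) (heA0 c a)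
  have E2 : qTsallis q (ptraceA ρABC) = t * ((∑ c, p c ^ q * β c) - 1) := by
    have hrep := block_rep VB ρB eB hrepB p (ptraceA ρABC) hBCe
    have := qTsallis_rep hq (ptraceA ρABC) _ _ (block_unitary VB hVB)
      (fun x => mul_nonneg (hp0 _) (heB0 _ _)) hrep
    rw [this, htdef]
    congr 1
    congr 1
    rw [Fintype.sum_prod_type, Finset.sum_comm]
    refine Finset.sum_congr rfl fun c _ => ?_
    rw [hβdef, Finset.mul_sum]
    exact Finset.sum_congr rfl fun b _ => Real.mul_rpow (hp0 c) (heB0 c b)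
  have E3 : qTsallis q (ptraceAB ρABC) = t * ((∑ c, p c ^ q) - 1) := by
    have hrep : ptraceAB ρABC
        = 1 * Matrix.diagonal (fun c => ((p c : ℝ) : ℂ)) * (1 : Matrix C C ℂ)ᴴ := by
      rw [hCe, Matrix.one_mul, Matrix.conjTranspose_one, Matrix.mul_one]
    have := qTsallis_rep hq (ptraceAB ρABC) 1 p (by simp) hp0 hrep
    rw [this, htdef]
  have E4 : qTsallis q ρABC = t * ((∑ c, p c ^ q * (α c * β c)) - 1) := by
    have hrep := block_rep2 VA VB ρA eA hrepA ρB eB hrepB p ρABC hρABC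
    have := qTsallis_rep hq ρABC _ _ (block_unitary2 VA hVA VB hVB)
      (fun x => mul_nonneg (mul_nonneg (hp0 _) (heA0 _ _)) (heB0 _ _)) hrep
    rw [this, htdef]
    congr 1
    congr 1
    rw [Fintype.sum_prod_type]
    simp_rw [Fintype.sum_prod_type]
    calc ∑ a : Fin dA, ∑ b : Fin dB, ∑ c, (p c * eA c a * eB c b) ^ q
        = ∑ a : Fin dA, ∑ c, ∑ b : Fin dB, (p c * eA c a * eB c b) ^ q :=
          Finset.sum_congr rfl fun a _ => Finset.sum_comm
      _ = ∑ c, ∑ a : Fin dA, ∑ b : Fin dB, (p c * eA c a * eB c b) ^ q :=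
          Finset.sum_comm
      _ = ∑ c, p c ^ q * (α c * β c) := by
          refine Finset.sum_congr rfl fun c _ => ?_
          have hterm : ∀ (a : Fin dA) (b : Fin dB),
              (p c * eA c a * eB c b) ^ q = p c ^ q * eA c a ^ q * eB c b ^ q := fun a b => by
            rw [Real.mul_rpow (mul_nonneg (hp0 c) (heA0 c a)) (heB0 c b),
              Real.mul_rpow (hp0 c) (heA0 c a)]
          simp only [hterm, hαdef, hβdef]
          rw [Finset.sum_mul_sum, Finset.mul_sum]
          refine Finset.sum_congr rfl fun a _ => ?_
          rw [Finset.mul_sum]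
          exact Finset.sum_congr rfl fun b _ => by ring
  have key : (∑ c, p c ^ q * α c) + (∑ c, p c ^ q * β c) - (∑ c, p c ^ q)
      - (∑ c, p c ^ q * (α c * β c))
      = ∑ c, p c ^ q * (α c + β c - 1 - α c * β c) := by
    rw [← Finset.sum_add_distrib, ← Finset.sum_sub_distrib, ← Finset.sum_sub_distrib]
    exact Finset.sum_congr rfl fun c _ => by ring
  have hsum : qTsallis q (ptraceB ρABC) + qTsallis q (ptraceA ρABC)
      - qTsallis q (ptraceAB ρABC) - qTsallis q ρABC
      = ∑ c, p c ^ q * (t * (α c + β c - 1 - α c * β c)) := by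
    rw [E1, E2, E3, E4]
    calc t * ((∑ c, p c ^ q * α c) - 1) + t * ((∑ c, p c ^ q * β c) - 1)
        - t * ((∑ c, p c ^ q) - 1) - t * ((∑ c, p c ^ q * (α c * β c)) - 1)
        = t * ((∑ c, p c ^ q * α c) + (∑ c, p c ^ q * β c) - (∑ c, p c ^ q)
            - (∑ c, p c ^ q * (α c * β c))) := by ring
      _ = t * ∑ c, p c ^ q * (α c + β c - 1 - α c * β c) := by rw [key]
      _ = ∑ c, p c ^ q * (t * (α c + β c - 1 - α c * β c)) := by
          rw [Finset.mul_sum]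
          exact Finset.sum_congr rfl fun c _ => by ring
  have E5 : ∀ c, qTsallis q (ρA c) = t * (α c - 1) := fun c => by
    have := qTsallis_rep hq (ρA c) (VA c) (eA c) (hVA c) (heA0 c) (hrepA c)
    rw [this, htdef]
  have E6 : ∀ c, qTsallis q (ρB c) = t * (β c - 1) := fun c => by
    have := qTsallis_rep hq (ρB c) (VB c) (eB c) (hVB c) (heB0 c) (hrepB c)
    rw [this, htdef]
  have E7 : ∀ c, qTsallis q (ρA c ⊗ₖ ρB c) = t * (α c * β c - 1) := fun c => by
    have hrep := kron_rep (VA c) (VB c) (ρA c) (eA c) (hrepA c) (ρB c) (eB c) (hrepB c)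
    have := qTsallis_rep hq (ρA c ⊗ₖ ρB c) _ _ (kron_unitary (VA c) (hVA c) (VB c) (hVB c))
      (fun x => mul_nonneg (heA0 c _) (heB0 c _)) hrep
    rw [this, htdef]
    congr 1
    congr 1
    rw [Fintype.sum_prod_type]
    simp only [hαdef, hβdef]
    rw [Finset.sum_mul_sum]
    refine Finset.sum_congr rfl fun a _ => Finset.sum_congr rfl fun b _ =>
      Real.mul_rpow (heA0 c a) (heB0 c b)
  have heq : qTsallis q (ptraceB ρABC) + qTsallis q (ptraceA ρABC)
      - qTsallis q (ptraceAB ρABC) - qTsallis q ρABC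
      = ∑ c ∈ univ.filter (fun c => 0 < p c), p c ^ q *
          (qTsallis q (ρA c) + qTsallis q (ρB c) - qTsallis q (ρA c ⊗ₖ ρB c)) := by
    rw [hsum, Finset.sum_filter]
    refine Finset.sum_congr rfl fun c _ => ?_
    by_cases hc : 0 < p c
    · rw [if_pos hc, E5 c, E6 c, E7 c]
      ring
    · have h0 : p c = 0 := le_antisymm (not_lt.mp hc) (hp0 c)
      rw [if_neg hc, h0, Real.zero_rpow hqne, zero_mul]
  have hdA1 : (1:ℝ) ≤ (dA:ℝ) := by
    have hne : dA ≠ 0 := by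
      intro h
      subst h
      have h1 := hρA1 c0
      rw [show (ρA c0).trace = ∑ a : Fin 0, ρA c0 a a from by
        simp [Matrix.trace, Matrix.diag]] at h1
      simp at h1
    exact_mod_cast Nat.one_le_iff_ne_zero.mpr hne
  have hdB1 : (1:ℝ) ≤ (dB:ℝ) := by
    have hne : dB ≠ 0 := by
      intro h
      subst h
      have h1 := hρB1 c0
      rw [show (ρB c0).trace = ∑ b : Fin 0, ρB c0 b b from by
        simp [Matrix.trace, Matrix.diag]] at h1
      simp at h1
    exact_mod_cast Nat.one_le_iff_ne_zero.mpr hne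
  have hKA : (0:ℝ) ≤ 1 - (dA:ℝ) ^ (1-q) := by
    have := Real.rpow_le_one_of_one_le_of_nonpos hdA1 (by linarith : 1 - q ≤ 0)
    linarith
  have hKB : (0:ℝ) ≤ 1 - (dB:ℝ) ^ (1-q) := by
    have := Real.rpow_le_one_of_one_le_of_nonpos hdB1 (by linarith : 1 - q ≤ 0)
    linarith
  have hineq : ∑ c, p c ^ q * (t * (α c + β c - 1 - α c * β c)) ≤ fBound q dA dB := by
    have hterm : ∀ c, t * (α c + β c - 1 - α c * β c)
        = (1/(q-1)) * ((1 - α c) * (1 - β c)) := fun c => by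
      rw [htdef]
      have h1 : (1:ℝ) - q ≠ 0 := by linarith
      have h2 : q - 1 ≠ 0 := by linarith
      field_simp
      ring
    have hbound : ∀ c, p c ^ q * (t * (α c + β c - 1 - α c * β c))
        ≤ p c * ((1/(q-1)) * ((1 - (dA:ℝ)^(1-q)) * (1 - (dB:ℝ)^(1-q)))) := by
      intro c
      rw [hterm c]
      have hα := hαb c
      have hβ := hβb c
      have h1 : (1 - α c) * (1 - β c) ≤ (1 - (dA:ℝ)^(1-q)) * (1 - (dB:ℝ)^(1-q)) :=
        mul_le_mul (by linarith [hα.1]) (by linarith [hβ.1]) (by linarith [hβ.2]) hKA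
      have hppos : 0 ≤ p c ^ q := Real.rpow_nonneg (hp0 c) q
      have hpq : p c ^ q ≤ p c := by
        rcases eq_or_lt_of_le (hp0 c) with h0 | h0
        · rw [← h0, Real.zero_rpow hqne]
        · have hle : p c ≤ 1 := by
            rw [← hp1]
            exact Finset.single_le_sum (fun j _ => hp0 j) (Finset.mem_univ c)
          simpa using Real.rpow_le_rpow_of_exponent_ge h0 hle hq.le
      have hs : (0:ℝ) ≤ 1/(q-1) := by positivity
      calc p c ^ q * ((1/(q-1)) * ((1 - α c) * (1 - β c)))
          ≤ p c ^ q * ((1/(q-1)) * ((1 - (dA:ℝ)^(1-q)) * (1 - (dB:ℝ)^(1-q)))) :=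
            mul_le_mul_of_nonneg_left (mul_le_mul_of_nonneg_left h1 hs) hppos
        _ ≤ p c * ((1/(q-1)) * ((1 - (dA:ℝ)^(1-q)) * (1 - (dB:ℝ)^(1-q)))) :=
            mul_le_mul_of_nonneg_right hpq
              (mul_nonneg hs (mul_nonneg hKA hKB))
    calc ∑ c, p c ^ q * (t * (α c + β c - 1 - α c * β c))
        ≤ ∑ c, p c * ((1/(q-1)) * ((1 - (dA:ℝ)^(1-q)) * (1 - (dB:ℝ)^(1-q)))) :=
          Finset.sum_le_sum fun c _ => hbound c
      _ = (∑ c, p c) * ((1/(q-1)) * ((1 - (dA:ℝ)^(1-q)) * (1 - (dB:ℝ)^(1-q)))) :=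
          (Finset.sum_mul _ _ _).symm
      _ = fBound q dA dB := by rw [hp1, one_mul, fBound]; ring
  exact ⟨by rw [hsum]; exact hineq, heq⟩
end

section
/- Let n, m ≥ 1 and let U be a complex matrix with rows indexed by pairs (a,b) ∈ Fin n × Fin m and columns indexed by Fin (n·m), satisfying U†U = I (U is unitary, identifying the index sets). Let d_C = n·m, define the unit vector τ indexed by triples (a,b,c) by τ_{(a,b,c)} = (1/√d_C)·U_{(a,b),c}, and let ρ = τ τ† be the corresponding rank-one density matrix (the normalised Choi state of the unitary channel). Then for every real q > 0 with q ≠ 1, the conditional quantum Tsallis mutual information of ρ between the first two subsystems given the third satisfies I_q(A:B|C) = S_q(ρ_{AC}) + S_q(ρ_{BC}) − S_q(ρ_C) − S_q(ρ) = f(q,n,m), where ρ_{AC}, ρ_{BC}, ρ_C are the partial traces of ρ. -/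
open Finset Matrix

lemma qTsallis_of_sq {N : Type*} [Fintype N] [DecidableEq N]
    (A : Matrix N N ℂ) (hA : A.IsHermitian) (c : ℝ) (hc : 0 < c)
    (hsq : A * A = (c : ℂ) • A) (htr : A.trace = 1) (q : ℝ) :
    qTsallis q A = (1 / (1 - q)) * (c ^ (q - 1) - 1) := by
  classical
  set Uu : Matrix N N ℂ := (hA.eigenvectorUnitary : Matrix N N ℂ) with hUu
  set D : Matrix N N ℂ := diagonal (RCLike.ofReal ∘ hA.eigenvalues) with hDdef
  have hD : star Uu * A * Uu = D := by
    have hUU0 : star Uu * Uu = 1 := (Matrix.mem_unitaryGroup_iff').mp hA.eigenvectorUnitary.2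
    conv_lhs => rw [hA.spectral_theorem, Unitary.conjStarAlgAut_apply]
    simp only [Unitary.coe_star, Matrix.mul_assoc]
    rw [hUU0, Matrix.mul_one, ← Matrix.mul_assoc, hUU0, Matrix.one_mul]
  have hUU : star Uu * Uu = 1 := (Matrix.mem_unitaryGroup_iff').mp hA.eigenvectorUnitary.2
  have hUU' : Uu * star Uu = 1 := (Matrix.mem_unitaryGroup_iff).mp hA.eigenvectorUnitary.2
  have hDD : D * D = (c : ℂ) • D := by
    rw [← hD]
    calc (star Uu * A * Uu) * (star Uu * A * Uu)
        = star Uu * (A * (Uu * star Uu) * A) * Uu := by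
          simp only [Matrix.mul_assoc]
      _ = star Uu * (A * A) * Uu := by rw [hUU']; simp [Matrix.mul_assoc]
      _ = (c : ℂ) • (star Uu * A * Uu) := by
          rw [hsq]; simp [Matrix.mul_smul, Matrix.smul_mul, Matrix.mul_assoc]
  have heig : ∀ i, hA.eigenvalues i = 0 ∨ hA.eigenvalues i = c := by
    intro i
    have h1 := congrFun (congrFun hDD i) i
    simp only [hDdef, diagonal_mul_diagonal, diagonal_apply_eq, Matrix.smul_apply,
      Function.comp_apply, smul_eq_mul] at h1
    have h3 : hA.eigenvalues i * hA.eigenvalues i = c * hA.eigenvalues i := by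
      apply RCLike.ofReal_injective (K := ℂ)
      rw [RCLike.ofReal_mul, RCLike.ofReal_mul]
      exact h1
    rcases eq_or_ne (hA.eigenvalues i) 0 with h | h
    · exact Or.inl h
    · exact Or.inr (mul_right_cancel₀ h h3)
  have hsum : ∑ i, hA.eigenvalues i = 1 := by
    have : A.trace = ∑ i, (hA.eigenvalues i : ℂ) := by
      conv_lhs => rw [hA.spectral_theorem]
      rw [Unitary.conjStarAlgAut_apply, Matrix.trace_mul_comm, ← Matrix.mul_assoc, hUU, Matrix.one_mul, Matrix.trace_diagonal]
      simp
    rw [htr] at this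
    exact_mod_cast this.symm
  -- the positive eigenvalues are exactly those equal to c
  set S := univ.filter (fun i => 0 < hA.eigenvalues i) with hS
  have hmem : ∀ i ∈ S, hA.eigenvalues i = c := by
    intro i hi
    rcases heig i with h | h
    · exfalso; rw [hS, mem_filter] at hi; linarith [hi.2]
    · exact h
  have hSsum : (S.card : ℝ) * c = 1 := by
    rw [← hsum]
    rw [← Finset.sum_subset (Finset.subset_univ S) (fun i _ hi => by
      rcases heig i with h | h
      · exact h
      · exfalso; rw [hS, mem_filter] at hi; push_neg at hi
        exact absurd (h ▸ hc) (by simpa using hi))]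
    rw [Finset.sum_congr rfl hmem, Finset.sum_const, nsmul_eq_mul]
  have hrpow : ∑ i ∈ S, hA.eigenvalues i ^ q = c ^ (q - 1) := by
    rw [Finset.sum_congr rfl (fun i hi => by rw [hmem i hi]), Finset.sum_const, nsmul_eq_mul]
    have : c ^ q = c * c ^ (q - 1) := by
      have h4 := (Real.rpow_add hc 1 (q - 1)).symm
      rw [Real.rpow_one, show (1 : ℝ) + (q - 1) = q by ring] at h4
      exact h4.symm
    rw [this, ← mul_assoc, mul_comm (S.card : ℝ) c, mul_comm c (S.card : ℝ), hSsum, one_mul]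
  rw [qTsallis, dif_pos hA]
  rw [show (univ.filter (fun i => 0 < hA.eigenvalues i)) = S from hS.symm, hrpow]

lemma qTsallis_gram {I J : Type*} [Fintype I] [Fintype J] [DecidableEq I] [DecidableEq J]
    (W : Matrix I J ℂ) (c : ℝ) (hc : 0 < c)
    (hW : Wᴴ * W = (c : ℂ) • 1) (hcard : (Fintype.card J : ℝ) * c = 1) (q : ℝ) :
    qTsallis q (W * Wᴴ) = (1 / (1 - q)) * (c ^ (q - 1) - 1) := by
  have hsq : (W * Wᴴ) * (W * Wᴴ) = (c : ℂ) • (W * Wᴴ) := by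
    have h1 : (W * Wᴴ) * (W * Wᴴ) = W * (Wᴴ * W) * Wᴴ := by
      simp only [Matrix.mul_assoc]
    rw [h1, hW]
    simp [Matrix.mul_smul, Matrix.smul_mul, Matrix.mul_assoc]
  have htr : (W * Wᴴ).trace = 1 := by
    rw [Matrix.trace_mul_comm, hW, Matrix.trace_smul, Matrix.trace_one]
    simp only [smul_eq_mul]
    rw [mul_comm]
    exact_mod_cast hcard
  exact qTsallis_of_sq _ (isHermitian_mul_conjTranspose_self W) c hc hsq htr q

/-- For the normalised Choi state `τ_{(a,b,c)} = (1/√(nm)) U_{(a,b),c}` of a unitary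
channel given by a unitary `U`, the conditional quantum Tsallis mutual information
between the first two subsystems given the third equals `f(q,n,m)` for every
`q > 0`, `q ≠ 1`. -/
theorem quantum_tsallis_cond_mutual_info_choi_unitary
    {n m : ℕ} (hn : 1 ≤ n) (hm : 1 ≤ m)
    (U : Matrix (Fin n × Fin m) (Fin (n * m)) ℂ)
    (hU : Uᴴ * U = 1)
    (τ : Fin n × Fin m × Fin (n * m) → ℂ)
    (hτ : ∀ a b c, τ (a, b, c) = ((1 / Real.sqrt (n * m) : ℝ) : ℂ) * U (a, b) c)
    (ρ : Matrix (Fin n × Fin m × Fin (n * m)) (Fin n × Fin m × Fin (n * m)) ℂ)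
    (hρ : ρ = Matrix.vecMulVec τ (star τ))
    (q : ℝ) (hq : 0 < q) (hq1 : q ≠ 1) :
    qTsallis q (ptraceB ρ) + qTsallis q (ptraceA ρ)
        - qTsallis q (ptraceAB ρ) - qTsallis q ρ
      = fBound q n m := by
  classical
  have hn0 : 0 < n := hn
  have hm0 : 0 < m := hm
  have hnm0 : 0 < n * m := Nat.mul_pos hn0 hm0
  have hnC : (n : ℂ) ≠ 0 := by exact_mod_cast hn0.ne'
  have hmC : (m : ℂ) ≠ 0 := by exact_mod_cast hm0.ne'
  set kc : ℂ := ((1 / Real.sqrt (n * m) : ℝ) : ℂ) with hkc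
  have hkstar : star kc = kc := by
    rw [hkc]; exact Complex.conj_ofReal _
  have hkk : kc * kc = (((n * m : ℕ) : ℝ)⁻¹ : ℝ) := by
    rw [hkc]
    rw [← Complex.ofReal_mul]
    congr 1
    rw [div_mul_div_comm, one_mul]
    rw [Real.mul_self_sqrt (by positivity)]
    push_cast
    ring
  -- U * Uᴴ = 1
  have hUU' : U * Uᴴ = 1 :=
    (Matrix.mul_eq_one_comm_of_equiv (finProdFinEquiv.symm)).mp hU
  have hrow : ∀ p p' : Fin n × Fin m, ∑ c, U p c * star (U p' c)
      = if p = p' then 1 else 0 := by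
    intro p p'
    have := congrFun (congrFun hUU' p) p'
    simpa [Matrix.mul_apply, Matrix.conjTranspose_apply, Matrix.one_apply] using this
  have hrow' : ∀ p p' : Fin n × Fin m, ∑ c, star (U p c) * U p' c
      = if p = p' then 1 else 0 := by
    intro p p'
    have h2 := congrArg star (hrow p p')
    simp only [star_sum, star_mul', star_star] at h2
    rw [h2]
    by_cases h : p = p' <;> simp [h]
  -- the Gram matrices
  set Wac : Matrix (Fin n × Fin (n * m)) (Fin m) ℂ :=
    Matrix.of (fun w b => kc * U (w.1, b) w.2) with hWac
  have hACeq : ptraceB ρ = Wac * Wacᴴ := by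
    ext w w'
    simp only [ptraceB, Matrix.of_apply, hρ, Matrix.vecMulVec_apply, Matrix.mul_apply,
      Matrix.conjTranspose_apply, hWac, Pi.star_apply, hτ]
  have hACgram : Wacᴴ * Wac = (((m : ℝ)⁻¹ : ℝ) : ℂ) • 1 := by
    ext b b'
    simp only [Matrix.mul_apply, Matrix.conjTranspose_apply, hWac, Matrix.of_apply,
      Matrix.smul_apply, Matrix.one_apply, smul_eq_mul]
    rw [Fintype.sum_prod_type]
    have inner : ∀ a : Fin n, ∑ c : Fin (n * m),
        star (kc * U (a, b) c) * (kc * U (a, b') c)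
        = (((n * m : ℕ) : ℝ)⁻¹ : ℝ) * (if b = b' then 1 else 0) := by
      intro a
      have h1 : ∀ c : Fin (n * m), star (kc * U (a, b) c) * (kc * U (a, b') c)
          = (kc * kc) * (star (U (a, b) c) * U (a, b') c) := by
        intro c
        rw [star_mul', hkstar]
        ring
      rw [Finset.sum_congr rfl (fun c _ => h1 c), ← Finset.mul_sum, hrow' (a, b) (a, b'), hkk]
      by_cases h : b = b' <;> simp [h]
    rw [Finset.sum_congr rfl (fun a _ => inner a), Finset.sum_const, nsmul_eq_mul]
    simp only [Finset.card_univ, Fintype.card_fin]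
    by_cases h : b = b' <;> simp [h] <;> push_cast <;> field_simp <;> ring
  set Wbc : Matrix (Fin m × Fin (n * m)) (Fin n) ℂ :=
    Matrix.of (fun w a => kc * U (a, w.1) w.2) with hWbc
  have hBCeq : ptraceA ρ = Wbc * Wbcᴴ := by
    ext w w'
    simp only [ptraceA, Matrix.of_apply, hρ, Matrix.vecMulVec_apply, Matrix.mul_apply,
      Matrix.conjTranspose_apply, hWbc, Pi.star_apply, hτ]
  have hBCgram : Wbcᴴ * Wbc = (((n : ℝ)⁻¹ : ℝ) : ℂ) • 1 := by
    ext a a'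
    simp only [Matrix.mul_apply, Matrix.conjTranspose_apply, hWbc, Matrix.of_apply,
      Matrix.smul_apply, Matrix.one_apply, smul_eq_mul]
    rw [Fintype.sum_prod_type]
    have inner : ∀ b : Fin m, ∑ c : Fin (n * m),
        star (kc * U (a, b) c) * (kc * U (a', b) c)
        = (((n * m : ℕ) : ℝ)⁻¹ : ℝ) * (if a = a' then 1 else 0) := by
      intro b
      have h1 : ∀ c : Fin (n * m), star (kc * U (a, b) c) * (kc * U (a', b) c)
          = (kc * kc) * (star (U (a, b) c) * U (a', b) c) := by
        intro c
        rw [star_mul', hkstar]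
        ring
      rw [Finset.sum_congr rfl (fun c _ => h1 c), ← Finset.mul_sum, hrow' (a, b) (a', b), hkk]
      by_cases h : a = a' <;> simp [h]
    rw [Finset.sum_congr rfl (fun b _ => inner b), Finset.sum_const, nsmul_eq_mul]
    simp only [Finset.card_univ, Fintype.card_fin]
    by_cases h : a = a' <;> simp [h] <;> push_cast <;> field_simp <;> ring
  set Wc : Matrix (Fin (n * m)) (Fin n × Fin m) ℂ :=
    Matrix.of (fun c p => kc * U p c) with hWc
  have hCeq : ptraceAB ρ = Wc * Wcᴴ := by
    ext c c'
    simp only [ptraceAB, Matrix.of_apply, hρ, Matrix.vecMulVec_apply, Matrix.mul_apply,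
      Matrix.conjTranspose_apply, hWc, Pi.star_apply, hτ]
    rw [Fintype.sum_prod_type]
  have hCgram : Wcᴴ * Wc = ((((n * m : ℕ) : ℝ)⁻¹ : ℝ) : ℂ) • 1 := by
    ext p p'
    simp only [Matrix.mul_apply, Matrix.conjTranspose_apply, hWc, Matrix.of_apply,
      Matrix.smul_apply, Matrix.one_apply, smul_eq_mul]
    have h1 : ∀ c : Fin (n * m), star (kc * U p c) * (kc * U p' c)
        = (kc * kc) * (star (U p c) * U p' c) := by
      intro c
      rw [star_mul', hkstar]
      ring
    rw [Finset.sum_congr rfl (fun c _ => h1 c), ← Finset.mul_sum, hrow' p p', hkk]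
  set Wf : Matrix (Fin n × Fin m × Fin (n * m)) (Fin 1) ℂ :=
    Matrix.of (fun x _ => τ x) with hWf
  have hFeq : ρ = Wf * Wfᴴ := by
    ext x y
    simp only [hρ, Matrix.vecMulVec_apply, Matrix.mul_apply, Matrix.conjTranspose_apply,
      hWf, Matrix.of_apply, Pi.star_apply, Finset.sum_const, Finset.card_univ,
      Fintype.card_fin, one_smul]
  have hFgram : Wfᴴ * Wf = (((1 : ℝ) : ℝ) : ℂ) • 1 := by
    ext i j
    simp only [Matrix.mul_apply, Matrix.conjTranspose_apply, hWf, Matrix.of_apply,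
      Matrix.smul_apply, Matrix.one_apply, smul_eq_mul]
    have hij : i = j := Subsingleton.elim i j
    rw [Fintype.sum_prod_type]
    have inner : ∀ a : Fin n, ∀ b : Fin m,
        ∑ c : Fin (n * m), star (τ (a, b, c)) * τ (a, b, c)
          = (((n * m : ℕ) : ℝ)⁻¹ : ℝ) := by
      intro a b
      have h1 : ∀ c : Fin (n * m), star (τ (a, b, c)) * τ (a, b, c)
          = (kc * kc) * (star (U (a, b) c) * U (a, b) c) := by
        intro c
        rw [hτ, star_mul', hkstar]
        ring
      rw [Finset.sum_congr rfl (fun c _ => h1 c), ← Finset.mul_sum, hrow' (a, b) (a, b), hkk]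
      simp
    have h2 : ∀ a : Fin n, ∑ b : Fin m, ∑ c : Fin (n * m), star (τ (a, b, c)) * τ (a, b, c)
        = (m : ℂ) * (((n * m : ℕ) : ℝ)⁻¹ : ℝ) := by
      intro a
      rw [Finset.sum_congr rfl (fun b _ => inner a b), Finset.sum_const, nsmul_eq_mul]
      simp
    have h3 : ∑ a : Fin n, ∑ y : Fin m × Fin (n * m), star (τ (a, y)) * τ (a, y)
        = (n : ℂ) * ((m : ℂ) * (((n * m : ℕ) : ℝ)⁻¹ : ℝ)) := by
      have hstep : ∀ a : Fin n, ∑ y : Fin m × Fin (n * m), star (τ (a, y)) * τ (a, y)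
          = (m : ℂ) * (((n * m : ℕ) : ℝ)⁻¹ : ℝ) := by
        intro a
        rw [Fintype.sum_prod_type]
        exact h2 a
      rw [Finset.sum_congr rfl (fun a _ => hstep a), Finset.sum_const, nsmul_eq_mul]
      simp
    rw [h3, hij, if_pos rfl]
    push_cast
    field_simp
  -- apply the Gram computation four times
  have hmR : (0:ℝ) < m := by exact_mod_cast hm0
  have hnR : (0:ℝ) < n := by exact_mod_cast hn0
  have hnmR : (0:ℝ) < ((n * m : ℕ) : ℝ) := by exact_mod_cast hnm0
  have hA := qTsallis_gram Wac ((m:ℝ)⁻¹) (by positivity) hACgram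
    (by simp [Fintype.card_fin]; field_simp) q
  have hB := qTsallis_gram Wbc ((n:ℝ)⁻¹) (by positivity) hBCgram
    (by simp [Fintype.card_fin]; field_simp) q
  have hC := qTsallis_gram Wc (((n * m : ℕ) : ℝ)⁻¹) (by positivity) hCgram
    (by simp [Fintype.card_prod, Fintype.card_fin]; field_simp) q
  have hF := qTsallis_gram Wf ((1:ℝ)) one_pos hFgram
    (by simp [Fintype.card_fin]) q
  rw [hACeq, hBCeq, hCeq, hFeq, hA, hB, hC, hF]
  -- arithmetic
  have h1q : (1:ℝ) - q ≠ 0 := sub_ne_zero.mpr (Ne.symm hq1)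
  have hq1' : (q:ℝ) - 1 ≠ 0 := sub_ne_zero.mpr hq1
  have hxm : ((m:ℝ)⁻¹) ^ (q-1) = (m:ℝ) ^ (1-q) := by
    rw [Real.inv_rpow hmR.le, ← Real.rpow_neg hmR.le, neg_sub]
  have hxn : ((n:ℝ)⁻¹) ^ (q-1) = (n:ℝ) ^ (1-q) := by
    rw [Real.inv_rpow hnR.le, ← Real.rpow_neg hnR.le, neg_sub]
  have hxnm : (((n * m : ℕ) : ℝ)⁻¹) ^ (q-1) = (n:ℝ) ^ (1-q) * (m:ℝ) ^ (1-q) := by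
    have hcast : ((n * m : ℕ) : ℝ) = (n:ℝ) * (m:ℝ) := by push_cast; ring
    rw [hcast, Real.inv_rpow (by positivity), ← Real.rpow_neg (by positivity), neg_sub,
      Real.mul_rpow hnR.le hmR.le]
  have hone : (1:ℝ) ^ (q-1) = 1 := Real.one_rpow _
  rw [hxm, hxn, hxnm, hone, fBound]
  field_simp
  ring
end
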